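/- arXiv:1502.02470 — 4 statements merged into one kernel-verified Lean document; each statement's English description precedes it below -/
import Mathlib

section
/- The coefficient of z^n in the formal power series (1/(z;q²)_∞) · Σ_{i≥0} (-z)^i q^{i(i+1)} / ((q²;q²)_i (1-c²q^{2i})) equals 1/(c²;q²)_{n+1}. -/
open scoped BigOperators

/-- Finite q-Pochhammer symbol `(a;q)_n`. -/
noncomputable def qPoch (a q : ℂ) (n : ℕ) : ℂ := ∏ k ∈ Finset.range n, (1 - a * q ^ k)

/-- Infinite q-Pochhammer symbol `(a;q)_∞`. -/
noncomputable def qPochInf (a q : ℂ) : ℂ := ∏' k : ℕ, (1 - a * q ^ k)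

/-- q-Pochhammer symbol with integer index: `(a;q)_m`, where for negative `m`
`(a;q)_{-k} = 1/∏_{j=1}^{k}(1 - a q^{-j})`. -/
noncomputable def qPochZ (a q : ℂ) (m : ℤ) : ℂ :=
  if 0 ≤ m then qPoch a q m.toNat
  else 1 / ∏ k ∈ Finset.range (-m).toNat, (1 - a * q ^ (-(k : ℤ) - 1))

/-- `(α, β)` is a Bailey pair relative to `a` in base `q`. -/
def IsBaileyPair (q a : ℂ) (α β : ℕ → ℂ) : Prop :=
  ∀ n : ℕ, β n = ∑ j ∈ Finset.range (n + 1),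
    α j / (qPoch q q (n - j) * qPoch (a * q) q (n + j))

/-- The Andrews–Hickerson Bailey pair `α*_n(a,b,c,q)` (Lemma 2.1). -/
noncomputable def alphaStar (a b c q : ℂ) (n : ℕ) : ℂ :=
  q ^ (n ^ 2) * (b * c) ^ n * (1 - a * q ^ (2 * n)) * qPoch (a / b) q n * qPoch (a / c) q n /
      ((1 - a) * qPoch (b * q) q n * qPoch (c * q) q n) *
    ∑ j ∈ Finset.range (n + 1),
      (-1 : ℂ) ^ j * (1 - a * q ^ (2 * (j : ℤ) - 1)) * qPochZ a q ((j : ℤ) - 1) *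
          qPoch b q j * qPoch c q j /
        (q ^ (j * (j - 1) / 2) * (b * c) ^ j * qPoch q q j * qPoch (a / b) q j *
          qPoch (a / c) q j)


open Finset Filter Topology

lemma my_tri (k : ℕ) : (k + 1) * k / 2 = k * (k - 1) / 2 + k := by
  cases k with
  | zero => rfl
  | succ j =>
    have h2 : (j + 1 + 1) * (j + 1) = (j + 1) * j + 2 * (j + 1) := by ring
    rw [Nat.succ_sub_one, h2, Nat.add_mul_div_left _ _ (by norm_num : 0 < 2)]

lemma my_one_sub_ne {w : ℂ} (hw : ‖w‖ < 1) : 1 - w ≠ 0 := by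
  intro h
  have : w = 1 := by linear_combination -h
  rw [this] at hw; simp at hw

lemma my_norm_mul_lt {Q w : ℂ} (hQ : ‖Q‖ < 1) (hw : ‖w‖ < 1) (k : ℕ) : ‖w * Q ^ k‖ < 1 := by
  rw [norm_mul, norm_pow]
  calc ‖w‖ * ‖Q‖ ^ k ≤ ‖w‖ * 1 :=
        mul_le_mul_of_nonneg_left (pow_le_one₀ (norm_nonneg _) hQ.le) (norm_nonneg _)
    _ = ‖w‖ := mul_one _
    _ < 1 := hw

lemma my_factor_ne {Q : ℂ} (hQ : ‖Q‖ < 1) (k : ℕ) : 1 - Q * Q ^ k ≠ 0 :=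
  my_one_sub_ne (my_norm_mul_lt hQ hQ k)

lemma my_poch_ne {Q : ℂ} (hQ : ‖Q‖ < 1) (n : ℕ) : qPoch Q Q n ≠ 0 :=
  Finset.prod_ne_zero_iff.2 fun k _ => my_factor_ne hQ k

lemma my_poch_succ (a Q : ℂ) (n : ℕ) : qPoch a Q (n + 1) = qPoch a Q n * (1 - a * Q ^ n) :=
  Finset.prod_range_succ _ _

lemma my_pow_ne {Q : ℂ} (hQ : ‖Q‖ < 1) {k : ℕ} (hk : 1 ≤ k) : 1 - Q ^ k ≠ 0 := by
  apply my_one_sub_ne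
  rw [norm_pow]
  calc ‖Q‖ ^ k ≤ ‖Q‖ ^ 1 := pow_le_pow_of_le_one (norm_nonneg _) hQ.le hk
    _ < 1 := by simpa using hQ

lemma my_weier (a : ℕ → ℝ) (h0 : ∀ k, 0 ≤ a k) (h1 : ∀ k, a k ≤ 1) (n : ℕ) :
    1 - ∑ k ∈ range n, a k ≤ ∏ k ∈ range n, (1 - a k) := by
  induction n with
  | zero => simp
  | succ n ih =>
    rw [prod_range_succ, sum_range_succ]
    have hp : (0:ℝ) ≤ ∏ k ∈ range n, (1 - a k) :=
      prod_nonneg fun k _ => by linarith [h1 k]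
    have hs : (0:ℝ) ≤ ∑ k ∈ range n, a k := sum_nonneg fun k _ => h0 k
    nlinarith [h0 n, h1 n]

lemma my_poch_lb {Q : ℂ} (hQ : ‖Q‖ < 1) : ∃ C : ℝ, 0 < C ∧ ∀ n, C ≤ ‖qPoch Q Q n‖ := by
  set r := ‖Q‖ with hr
  have hr0 : 0 ≤ r := norm_nonneg _
  have hfac : ∀ k : ℕ, 0 < 1 - r ^ (k + 1) := by
    intro k
    have : r ^ (k+1) ≤ r ^ 1 := pow_le_pow_of_le_one hr0 hQ.le (by omega)
    simp only [pow_one] at this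
    linarith
  have hfac1 : ∀ k : ℕ, 1 - r ^ (k + 1) ≤ 1 := by
    intro k; have := pow_nonneg hr0 (k+1); linarith
  obtain ⟨N, hN⟩ : ∃ N, r ^ N < (1 - r) / 2 := by
    have ht := tendsto_pow_atTop_nhds_zero_of_lt_one hr0 hQ
    have := (ht.eventually (gt_mem_nhds (show (0:ℝ) < (1-r)/2 by linarith))).exists
    exact this
  have hlow : ∀ n, (∏ k ∈ range N, (1 - r ^ (k+1))) * (1/2) ≤ ∏ k ∈ range n, (1 - r ^ (k+1)) := by
    intro n
    rcases le_or_gt n N with h | h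
    · obtain ⟨m, rfl⟩ := Nat.exists_eq_add_of_le h
      rw [prod_range_add]
      have h2 : ∏ i ∈ range m, (1 - r ^ (n + i + 1)) ≤ 1 :=
        prod_le_one (fun k _ => (hfac _).le) (fun k _ => hfac1 _)
      have h1 : (0:ℝ) < ∏ k ∈ range n, (1 - r ^ (k+1)) := prod_pos fun k _ => hfac k
      nlinarith [prod_pos (fun k (_ : k ∈ range m) => hfac (n + k))]
    · obtain ⟨m, rfl⟩ := Nat.exists_eq_add_of_le h.le
      rw [prod_range_add]
      have hsum : ∑ j ∈ range m, r ^ (N + j + 1) ≤ 1/2 := by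
        have h1 : ∀ j ∈ range m, r ^ (N + j + 1) ≤ r ^ N * r ^ (j+1) := by
          intro j _
          rw [← pow_add]
          apply le_of_eq; ring_nf
        calc ∑ j ∈ range m, r ^ (N + j + 1) ≤ ∑ j ∈ range m, r ^ N * r ^ (j+1) :=
              sum_le_sum h1
          _ = r ^ N * ∑ j ∈ range m, r * r ^ j := by rw [mul_sum]; congr 1; ext j; ring
          _ = r ^ N * (r * ∑ j ∈ range m, r ^ j) := by rw [← mul_sum]
          _ ≤ (1-r)/2 * (1 * (1-r)⁻¹) := by
              apply mul_le_mul hN.le ?_ (by positivity) (by linarith)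
              apply mul_le_mul hQ.le ?_ (by positivity) one_pos.le
              calc ∑ j ∈ range m, r ^ j ≤ ∑' j : ℕ, r ^ j :=
                    Summable.sum_le_tsum _ (fun j _ => pow_nonneg hr0 j)
                      (summable_geometric_of_lt_one hr0 hQ)
                _ = (1-r)⁻¹ := tsum_geometric_of_lt_one hr0 hQ
          _ = 1/2 := by
              have hne : (1:ℝ) - r ≠ 0 := by linarith
              field_simp
      have h2 : (1:ℝ)/2 ≤ ∏ j ∈ range m, (1 - r ^ (N + j + 1)) := by
        have := my_weier (fun j => r ^ (N + j + 1)) (fun j => pow_nonneg hr0 _)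
          (fun j => by have := pow_nonneg hr0 (N+j+1);
                       have : r ^ (N+j+1) ≤ r ^ 0 := pow_le_pow_of_le_one hr0 hQ.le (by omega)
                       simpa using this) m
        linarith
      have h1 : (0:ℝ) < ∏ k ∈ range N, (1 - r ^ (k+1)) := prod_pos fun k _ => hfac k
      nlinarith
  refine ⟨(∏ k ∈ range N, (1 - r ^ (k+1))) * (1/2), mul_pos (prod_pos fun k _ => hfac k) one_half_pos, fun n => ?_⟩
  refine le_trans (hlow n) ?_
  rw [qPoch, norm_prod]
  apply prod_le_prod (fun k _ => (hfac k).le)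
  intro k _
  calc 1 - r ^ (k+1) = 1 - ‖Q * Q ^ k‖ := by rw [norm_mul, norm_pow, pow_succ']
    _ ≤ ‖1 - Q * Q ^ k‖ := by
        have := norm_sub_norm_le (1 : ℂ) (Q * Q ^ k)
        simpa using this

lemma my_summable_norm_a {Q z : ℂ} (hQ : ‖Q‖ < 1) (hz : ‖z‖ < 1) :
    Summable fun m : ℕ => ‖z ^ m / qPoch Q Q m‖ := by
  obtain ⟨C, hC, hCle⟩ := my_poch_lb hQ
  refine Summable.of_nonneg_of_le (fun m => norm_nonneg _) (fun m => ?_)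
    ((summable_geometric_of_lt_one (norm_nonneg z) hz).mul_left C⁻¹)
  rw [norm_div, norm_pow]
  have hP : 0 < ‖qPoch Q Q m‖ := lt_of_lt_of_le hC (hCle m)
  calc ‖z‖ ^ m / ‖qPoch Q Q m‖ ≤ ‖z‖ ^ m / C := by gcongr; exact hCle m
    _ = C⁻¹ * ‖z‖ ^ m := by rw [div_eq_inv_mul]

lemma my_summable_a {Q z : ℂ} (hQ : ‖Q‖ < 1) (hz : ‖z‖ < 1) :
    Summable fun m : ℕ => z ^ m / qPoch Q Q m :=
  (my_summable_norm_a hQ hz).of_norm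

lemma my_funEq {Q w : ℂ} (hQ : ‖Q‖ < 1) (hw : ‖w‖ < 1) :
    (1 - w) * ∑' m : ℕ, w ^ m / qPoch Q Q m = ∑' m : ℕ, (Q * w) ^ m / qPoch Q Q m := by
  have hf : Summable fun m : ℕ => w ^ m / qPoch Q Q m := my_summable_a hQ hw
  have hQw : ‖Q * w‖ < 1 := by
    have := my_norm_mul_lt hQ hw 1
    calc ‖Q * w‖ = ‖w * Q ^ 1‖ := by rw [pow_one, mul_comm]
      _ < 1 := this
  have hg : Summable fun m : ℕ => (Q * w) ^ m / qPoch Q Q m := my_summable_a hQ hQw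
  have key : ∑' m : ℕ, (w ^ m / qPoch Q Q m - (Q * w) ^ m / qPoch Q Q m)
      = w * ∑' m : ℕ, w ^ m / qPoch Q Q m := by
    rw [Summable.tsum_eq_zero_add (hf.sub hg)]
    have h0 : w ^ 0 / qPoch Q Q 0 - (Q * w) ^ 0 / qPoch Q Q 0 = 0 := by simp
    rw [h0, zero_add]
    have hterm : ∀ m : ℕ, w ^ (m+1) / qPoch Q Q (m+1) - (Q * w) ^ (m+1) / qPoch Q Q (m+1)
        = w * (w ^ m / qPoch Q Q m) := by
      intro m
      rw [my_poch_succ]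
      have h1 := my_factor_ne hQ m
      have h2 := my_poch_ne hQ m
      field_simp
      ring
    rw [tsum_congr hterm, tsum_mul_left]
  rw [Summable.tsum_sub hf hg] at key
  linear_combination key

lemma my_iter {Q z : ℂ} (hQ : ‖Q‖ < 1) (hz : ‖z‖ < 1) (n : ℕ) :
    (∏ k ∈ range n, (1 - z * Q ^ k)) * ∑' m : ℕ, z ^ m / qPoch Q Q m
      = ∑' m : ℕ, (Q ^ n * z) ^ m / qPoch Q Q m := by
  induction n with
  | zero => simp
  | succ n ih =>
    have hw : ‖Q ^ n * z‖ < 1 := by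
      rw [mul_comm]; exact my_norm_mul_lt hQ hz n
    have hfe := my_funEq hQ hw
    rw [prod_range_succ, mul_comm (∏ k ∈ range n, (1 - z * Q ^ k)) (1 - z * Q ^ n),
      mul_assoc, ih]
    have e1 : 1 - z * Q ^ n = 1 - Q ^ n * z := by ring
    have e2 : ∀ m : ℕ, (Q ^ (n+1) * z) ^ m = (Q * (Q ^ n * z)) ^ m := by
      intro m; ring
    rw [e1, hfe]
    exact tsum_congr fun m => by rw [e2 m]

lemma my_multipliable {Q z : ℂ} (hQ : ‖Q‖ < 1) (hz : ‖z‖ < 1) :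
    Multipliable fun k : ℕ => 1 - z * Q ^ k := by
  apply Complex.multipliable_of_summable_log
  · apply Summable.of_norm
    set K : ℝ := ‖z‖ * (‖z‖ * (1 - ‖z‖)⁻¹ / 2 + 1) with hK
    refine Summable.of_nonneg_of_le (fun k => norm_nonneg _) (fun k => ?_)
      ((summable_geometric_of_lt_one (norm_nonneg Q) hQ).mul_left K)
  
    show ‖Complex.log (1 - z * Q ^ k)‖ ≤ K * ‖Q‖ ^ k
    have h1 : (1 : ℂ) - z * Q ^ k = 1 + (-(z * Q ^ k)) := by ring
    rw [h1]
    have hw : ‖-(z * Q ^ k)‖ < 1 := by rw [norm_neg]; exact my_norm_mul_lt hQ hz k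
    refine le_trans (Complex.norm_log_one_add_le hw) ?_
    rw [norm_neg, norm_mul, norm_pow]
    have hqk : ‖Q‖ ^ k ≤ 1 := pow_le_one₀ (norm_nonneg _) hQ.le
    have hwz : ‖z‖ * ‖Q‖ ^ k ≤ ‖z‖ := by
      calc ‖z‖ * ‖Q‖ ^ k ≤ ‖z‖ * 1 := by gcongr
        _ = ‖z‖ := mul_one _
    have hinv : (1 - ‖z‖ * ‖Q‖ ^ k)⁻¹ ≤ (1 - ‖z‖)⁻¹ :=
      inv_anti₀ (by linarith) (by linarith)
    have hsq : (‖z‖ * ‖Q‖ ^ k) ^ 2 ≤ ‖z‖ ^ 2 * ‖Q‖ ^ k := by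
      have : (‖z‖ * ‖Q‖ ^ k) ^ 2 = ‖z‖ ^ 2 * ‖Q‖ ^ k * ‖Q‖ ^ k := by ring
      rw [this]
      calc ‖z‖ ^ 2 * ‖Q‖ ^ k * ‖Q‖ ^ k ≤ ‖z‖ ^ 2 * ‖Q‖ ^ k * 1 := by
            apply mul_le_mul_of_nonneg_left hqk (by positivity)
        _ = ‖z‖ ^ 2 * ‖Q‖ ^ k := mul_one _
    have hz1 : (0:ℝ) < 1 - ‖z‖ := by linarith
    calc (‖z‖ * ‖Q‖ ^ k) ^ 2 * (1 - ‖z‖ * ‖Q‖ ^ k)⁻¹ / 2 + ‖z‖ * ‖Q‖ ^ k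
        ≤ ‖z‖ ^ 2 * ‖Q‖ ^ k * (1 - ‖z‖)⁻¹ / 2 + ‖z‖ * ‖Q‖ ^ k := by
          have hmm : (‖z‖ * ‖Q‖ ^ k) ^ 2 * (1 - ‖z‖ * ‖Q‖ ^ k)⁻¹
              ≤ ‖z‖ ^ 2 * ‖Q‖ ^ k * (1 - ‖z‖)⁻¹ :=
            mul_le_mul hsq hinv (inv_nonneg.mpr (by nlinarith)) (by positivity)
          linarith
      _ = K * ‖Q‖ ^ k := by rw [hK]; ring

lemma my_tendsto {Q z : ℂ} (hQ : ‖Q‖ < 1) (hz : ‖z‖ < 1) :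
    Tendsto (fun n : ℕ => ∑' m : ℕ, (Q ^ n * z) ^ m / qPoch Q Q m) atTop (𝓝 1) := by
  obtain ⟨C, hC, hCle⟩ := my_poch_lb hQ
  rw [tendsto_iff_norm_sub_tendsto_zero]
  apply squeeze_zero (fun n => norm_nonneg _)
    (g := fun n => ‖Q‖ ^ n * (‖z‖ * C⁻¹ * (1 - ‖z‖)⁻¹))
  · intro n
    set w : ℂ := Q ^ n * z with hwdef
    have hwn : ‖w‖ = ‖Q‖ ^ n * ‖z‖ := by rw [hwdef, norm_mul, norm_pow]
    have hqn : ‖Q‖ ^ n ≤ 1 := pow_le_one₀ (norm_nonneg _) hQ.le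
    have hwz : ‖w‖ ≤ ‖z‖ := by
      rw [hwn]
      calc ‖Q‖ ^ n * ‖z‖ ≤ 1 * ‖z‖ := by gcongr
        _ = ‖z‖ := one_mul _
    have hw1 : ‖w‖ < 1 := lt_of_le_of_lt hwz hz
    have hsum : Summable fun m : ℕ => w ^ m / qPoch Q Q m := my_summable_a hQ hw1
    rw [Summable.tsum_eq_zero_add hsum]
    have h0 : w ^ 0 / qPoch Q Q 0 = 1 := by simp [qPoch]
    rw [h0, add_sub_cancel_left]
    have hbound : ‖∑' m : ℕ, w ^ (m+1) / qPoch Q Q (m+1)‖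
        ≤ ‖w‖ * C⁻¹ * (1 - ‖w‖)⁻¹ := by
      have hgeo : HasSum (fun m : ℕ => ‖w‖ * C⁻¹ * ‖w‖ ^ m)
          (‖w‖ * C⁻¹ * (1 - ‖w‖)⁻¹) :=
        (hasSum_geometric_of_lt_one (norm_nonneg w) hw1).mul_left _
      refine tsum_of_norm_bounded hgeo (fun m => ?_)
      rw [norm_div, norm_pow]
      have hP : 0 < ‖qPoch Q Q (m+1)‖ := lt_of_lt_of_le hC (hCle (m+1))
      calc ‖w‖ ^ (m+1) / ‖qPoch Q Q (m+1)‖ ≤ ‖w‖ ^ (m+1) / C := by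
            gcongr; exact hCle (m+1)
        _ = ‖w‖ * C⁻¹ * ‖w‖ ^ m := by rw [pow_succ]; field_simp
    refine le_trans hbound ?_
    have hinv : (1 - ‖w‖)⁻¹ ≤ (1 - ‖z‖)⁻¹ :=
      inv_anti₀ (by linarith) (by linarith)
    calc ‖w‖ * C⁻¹ * (1 - ‖w‖)⁻¹ ≤ ‖w‖ * C⁻¹ * (1 - ‖z‖)⁻¹ := by
          apply mul_le_mul_of_nonneg_left hinv (by positivity)
      _ = ‖Q‖ ^ n * (‖z‖ * C⁻¹ * (1 - ‖z‖)⁻¹) := by rw [hwn]; ring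
  · have := (tendsto_pow_atTop_nhds_zero_of_lt_one (norm_nonneg Q) hQ).mul_const
      (‖z‖ * C⁻¹ * (1 - ‖z‖)⁻¹)
    simpa using this

lemma my_euler {Q z : ℂ} (hQ : ‖Q‖ < 1) (hz : ‖z‖ < 1) :
    (∏' k : ℕ, (1 - z * Q ^ k)) * ∑' m : ℕ, z ^ m / qPoch Q Q m = 1 := by
  have h1 := (my_multipliable hQ hz).hasProd.tendsto_prod_nat
  have h2 := h1.mul_const (∑' m : ℕ, z ^ m / qPoch Q Q m)
  have h3 : (fun n : ℕ => (∏ k ∈ range n, (1 - z * Q ^ k)) * ∑' m : ℕ, z ^ m / qPoch Q Q m)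
      = fun n : ℕ => ∑' m : ℕ, (Q ^ n * z) ^ m / qPoch Q Q m :=
    funext (my_iter hQ hz)
  rw [h3] at h2
  exact tendsto_nhds_unique h2 (my_tendsto hQ hz)

-- P (m+1) = P m * (1 - Q^(m+1))
lemma my_poch_succ' (Q : ℂ) (m : ℕ) :
    qPoch Q Q (m + 1) = qPoch Q Q m * (1 - Q ^ (m + 1)) := by
  rw [my_poch_succ, ← pow_succ']

lemma my_step {A B a b s : ℂ} (hA : A ≠ 0) (hB : B ≠ 0) (ha : 1 - a ≠ 0)
    (hb : 1 - b ≠ 0) (hab : 1 - a * b ≠ 0) :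
    s / (A * (1 - a) * (B * (1 - b))) =
      s / (A * (B * (1 - b)) * (1 - a * b)) - -s * a / (A * (1 - a) * B * (1 - a * b)) := by
  rw [div_sub_div _ _ (by simp [hA, hB, hb, hab] : A * (B * (1 - b)) * (1 - a * b) ≠ 0)
      (by simp [hA, hB, ha, hab] : A * (1 - a) * B * (1 - a * b) ≠ 0),
    div_eq_div_iff (by simp [hA, hB, ha, hb] : A * (1 - a) * (B * (1 - b)) ≠ 0)
      (by simp [hA, hB, ha, hb, hab] : A * (B * (1 - b)) * (1 - a * b) * (A * (1 - a) * B * (1 - a * b)) ≠ 0)]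
  ring

lemma my_gauss {Q : ℂ} (hQ : ‖Q‖ < 1) (M : ℕ) :
    ∑ k ∈ range (M + 2),
      (-1 : ℂ) ^ k * Q ^ (k * (k - 1) / 2) / (qPoch Q Q k * qPoch Q Q (M + 1 - k)) = 0 := by
  set h : ℕ → ℂ := fun k => if 1 ≤ k ∧ k ≤ M + 1 then
      (-1 : ℂ) ^ k * Q ^ (k * (k - 1) / 2) /
        (qPoch Q Q (k - 1) * qPoch Q Q (M + 1 - k) * (1 - Q ^ (M + 1))) else 0 with hh
  have key : ∀ k ∈ range (M + 2),
      (-1 : ℂ) ^ k * Q ^ (k * (k - 1) / 2) / (qPoch Q Q k * qPoch Q Q (M + 1 - k))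
        = h k - h (k + 1) := by
    intro k hk
    rw [mem_range] at hk
    have hMne := my_pow_ne hQ (show 1 ≤ M + 1 by omega)
    rcases Nat.eq_zero_or_pos k with rfl | hk1
    · -- k = 0
      have h0 : h 0 = 0 := by rw [hh]; simp
      have h1 : h 1 = (-1 : ℂ) / (qPoch Q Q 0 * qPoch Q Q M * (1 - Q ^ (M + 1))) := by
        rw [hh]; simp
      rw [h0, h1, zero_sub]
      have e : qPoch Q Q (M + 1 - 0) = qPoch Q Q M * (1 - Q ^ (M + 1)) := my_poch_succ' Q M
      rw [e]
      have hp0 : qPoch Q Q 0 = 1 := by simp [qPoch]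
      rw [hp0]
      have := my_poch_ne hQ M
      field_simp
      simp
    rcases Nat.lt_or_ge k (M + 1) with hkM | hkM
    · -- 1 ≤ k ≤ M
      have e1 : h k = (-1 : ℂ) ^ k * Q ^ (k * (k - 1) / 2) /
          (qPoch Q Q (k - 1) * qPoch Q Q (M + 1 - k) * (1 - Q ^ (M + 1))) := by
        rw [hh]; simp only [if_pos (⟨hk1, by omega⟩ : 1 ≤ k ∧ k ≤ M + 1)]
      have e2 : h (k + 1) = (-1 : ℂ) ^ (k + 1) * Q ^ ((k + 1) * k / 2) /
          (qPoch Q Q k * qPoch Q Q (M - k) * (1 - Q ^ (M + 1))) := by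
        simp only [hh, if_pos (⟨by omega, by omega⟩ : 1 ≤ k + 1 ∧ k + 1 ≤ M + 1)]
        rw [show k + 1 - 1 = k from rfl, show M + 1 - (k + 1) = M - k from by omega]
      -- abbreviations
      have hPk : qPoch Q Q k = qPoch Q Q (k - 1) * (1 - Q ^ k) := by
        have := my_poch_succ' Q (k - 1)
        rw [show k - 1 + 1 = k by omega] at this
        exact this
      have hPM : qPoch Q Q (M + 1 - k) = qPoch Q Q (M - k) * (1 - Q ^ (M + 1 - k)) := by
        have := my_poch_succ' Q (M - k)
        rw [show M - k + 1 = M + 1 - k by omega] at this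
        exact this
      have hsgn : (-1 : ℂ) ^ (k + 1) = -(-1 : ℂ) ^ k := by rw [pow_succ]; ring
      have hexp : Q ^ ((k + 1) * k / 2) = Q ^ (k * (k - 1) / 2) * Q ^ k := by
        rw [← pow_add, my_tri]
      have hab : Q ^ k * Q ^ (M + 1 - k) = Q ^ (M + 1) := by
        rw [← pow_add]; congr 1; omega
      have hA := my_poch_ne hQ (k - 1)
      have hB := my_poch_ne hQ (M - k)
      have ha := my_pow_ne hQ hk1
      have hb := my_pow_ne hQ (show 1 ≤ M + 1 - k by omega)
      rw [e1, e2, hPk, hPM, hsgn, hexp, ← hab]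
      have hane : (1 : ℂ) - Q ^ k * Q ^ (M + 1 - k) ≠ 0 := by rw [hab]; exact hMne
      have key2 := my_step (s := (-1 : ℂ) ^ k * Q ^ (k * (k - 1) / 2)) (a := Q ^ k)
        (b := Q ^ (M + 1 - k)) hA hB ha hb hane
      linear_combination key2
    · -- k = M + 1
      have hkeq : k = M + 1 := by omega
      subst hkeq
      have e1 : h (M + 1) = (-1 : ℂ) ^ (M + 1) * Q ^ ((M + 1) * M / 2) /
          (qPoch Q Q M * qPoch Q Q 0 * (1 - Q ^ (M + 1))) := by
        simp only [hh, if_pos (⟨by omega, le_refl _⟩ : 1 ≤ M + 1 ∧ M + 1 ≤ M + 1)]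
        rw [show M + 1 - 1 = M from rfl, show M + 1 - (M + 1) = 0 from by omega]
      have e2 : h (M + 2) = 0 := by
        rw [hh]; simp only [if_neg (by omega : ¬(1 ≤ M + 2 ∧ M + 2 ≤ M + 1))]
      rw [e1, e2, sub_zero]
      have hsub : M + 1 - (M + 1) = 0 := by omega
      have hexp : (M + 1) * ((M + 1) - 1) / 2 = (M + 1) * M / 2 := by norm_num
      rw [hsub, hexp, my_poch_succ' Q M]
      have hp0 : qPoch Q Q 0 = 1 := by simp [qPoch]
      rw [hp0]
      ring
  rw [Finset.sum_congr rfl key, Finset.sum_range_sub' h]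
  have h0 : h 0 = 0 := by rw [hh]; simp
  have h2 : h (M + 2) = 0 := by
    rw [hh]; simp only [if_neg (by omega : ¬(1 ≤ M + 2 ∧ M + 2 ≤ M + 1))]
  rw [h0, h2, sub_zero]

lemma my_pf {Q x : ℂ} (hQ : ‖Q‖ < 1) (hx : ∀ k : ℕ, 1 - x * Q ^ k ≠ 0) (n : ℕ) :
    ∑ k ∈ range (n + 1), (-1 : ℂ) ^ k * Q ^ (k * (k + 1) / 2) /
        (qPoch Q Q k * qPoch Q Q (n - k) * (1 - x * Q ^ k))
      = 1 / ∏ k ∈ range (n + 1), (1 - x * Q ^ k) := by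
  induction n with
  | zero => simp [qPoch]
  | succ n ih =>
    have hD : 1 - x * Q ^ (n + 1) ≠ 0 := hx (n + 1)
    have hprod : (∏ k ∈ range (n + 1), (1 - x * Q ^ k)) ≠ 0 :=
      prod_ne_zero_iff.2 fun k _ => hx k
    -- the key multiplied identity
    have dagger : (∑ k ∈ range (n + 2), (-1 : ℂ) ^ k * Q ^ (k * (k + 1) / 2) /
          (qPoch Q Q k * qPoch Q Q (n + 1 - k) * (1 - x * Q ^ k))) * (1 - x * Q ^ (n + 1))
        = ∑ k ∈ range (n + 1), (-1 : ℂ) ^ k * Q ^ (k * (k + 1) / 2) /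
          (qPoch Q Q k * qPoch Q Q (n - k) * (1 - x * Q ^ k)) := by
      rw [sum_mul]
      have point : ∀ k ∈ range (n + 2),
          ((-1 : ℂ) ^ k * Q ^ (k * (k + 1) / 2) /
              (qPoch Q Q k * qPoch Q Q (n + 1 - k) * (1 - x * Q ^ k))) * (1 - x * Q ^ (n + 1))
            = ((-1 : ℂ) ^ k * Q ^ (k * (k - 1) / 2) / (qPoch Q Q k * qPoch Q Q (n + 1 - k)))
                * Q ^ (n + 1)
              + (-1 : ℂ) ^ k * Q ^ (k * (k + 1) / 2) * (1 - Q ^ (n + 1 - k)) /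
                (qPoch Q Q k * qPoch Q Q (n + 1 - k) * (1 - x * Q ^ k)) := by
        intro k hk
        rw [mem_range] at hk
        have hab : Q ^ k * Q ^ (n + 1 - k) = Q ^ (n + 1) := by
          rw [← pow_add]; congr 1; omega
        have hexp : Q ^ (k * (k + 1) / 2) = Q ^ (k * (k - 1) / 2) * Q ^ k := by
          rw [← pow_add, mul_comm k (k + 1), my_tri]
        have hPk := my_poch_ne hQ k
        have hPn := my_poch_ne hQ (n + 1 - k)
        have hDk := hx k
        rw [hexp, ← hab]
        have key2 : ∀ s A B a b xx : ℂ, A ≠ 0 → B ≠ 0 → (1 - xx * a) ≠ 0 →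
            s * a / (A * B * (1 - xx * a)) * (1 - xx * (a * b))
              = s / (A * B) * (a * b) + s * a * (1 - b) / (A * B * (1 - xx * a)) := by
          intro s A B a b xx hA hB hxa
          have hxa' : 1 - a * xx ≠ 0 := by rwa [mul_comm]
          field_simp
          ring
        have := key2 ((-1 : ℂ) ^ k * Q ^ (k * (k - 1) / 2)) (qPoch Q Q k)
          (qPoch Q Q (n + 1 - k)) (Q ^ k) (Q ^ (n + 1 - k)) x hPk hPn (by
            rw [mul_comm x (Q ^ k)] at hDk ⊢
            exact hDk)
        linear_combination this
      rw [sum_congr rfl point, sum_add_distrib]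
      have hgauss : ∑ k ∈ range (n + 2),
          ((-1 : ℂ) ^ k * Q ^ (k * (k - 1) / 2) / (qPoch Q Q k * qPoch Q Q (n + 1 - k)))
            * Q ^ (n + 1) = 0 := by
        rw [← sum_mul, my_gauss hQ n, zero_mul]
      rw [hgauss, zero_add]
      rw [sum_range_succ]
      have hlast : (-1 : ℂ) ^ (n + 1) * Q ^ ((n + 1) * (n + 2) / 2) * (1 - Q ^ (n + 1 - (n + 1))) /
          (qPoch Q Q (n + 1) * qPoch Q Q (n + 1 - (n + 1)) * (1 - x * Q ^ (n + 1))) = 0 := by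
        rw [show n + 1 - (n + 1) = 0 from by omega]
        norm_num
      rw [show (n+1) * ((n+1)+1) / 2 = (n+1) * (n+2) / 2 from rfl] at *
      rw [hlast, add_zero]
      apply sum_congr rfl
      intro k hk
      rw [mem_range] at hk
      have hPM : qPoch Q Q (n + 1 - k) = qPoch Q Q (n - k) * (1 - Q ^ (n + 1 - k)) := by
        have := my_poch_succ' Q (n - k)
        rw [show n - k + 1 = n + 1 - k by omega] at this
        exact this
      have hb := my_pow_ne hQ (show 1 ≤ n + 1 - k by omega)
      have hPk := my_poch_ne hQ k
      have hPn := my_poch_ne hQ (n - k)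
      have hDk := hx k
      rw [hPM]
      rw [div_eq_div_iff (by simp [hPk, hPn, hb, hDk] : qPoch Q Q k * (qPoch Q Q (n - k) * (1 - Q ^ (n + 1 - k))) * (1 - x * Q ^ k) ≠ 0)
        (by simp [hPk, hPn, hDk] : qPoch Q Q k * qPoch Q Q (n - k) * (1 - x * Q ^ k) ≠ 0)]
      ring
    -- conclude
    rw [ih] at dagger
    rw [prod_range_succ, eq_div_iff (mul_ne_zero hprod hD)]
    have hinv : (∏ k ∈ range (n + 1), (1 - x * Q ^ k)) *
        (1 / ∏ k ∈ range (n + 1), (1 - x * Q ^ k)) = 1 := by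
      field_simp
    linear_combination (∏ k ∈ range (n + 1), (1 - x * Q ^ k)) * dagger + hinv

lemma my_unif {Q x : ℂ} (hQ : ‖Q‖ < 1) (hx : ∀ i : ℕ, 1 - x * Q ^ i ≠ 0) :
    ∃ δ : ℝ, 0 < δ ∧ ∀ i, δ ≤ ‖1 - x * Q ^ i‖ := by
  have ht : Tendsto (fun i : ℕ => 1 - x * Q ^ i) atTop (𝓝 1) := by
    have h0 : Tendsto (fun i : ℕ => x * Q ^ i) atTop (𝓝 0) := by
      have := (tendsto_pow_atTop_nhds_zero_of_norm_lt_one hQ).const_mul x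
      simpa using this
    have := h0.const_sub 1
    simpa using this
  have hnorm : Tendsto (fun i : ℕ => ‖1 - x * Q ^ i‖) atTop (𝓝 1) := by
    have := ht.norm
    simpa using this
  obtain ⟨N, hN⟩ := (hnorm.eventually (lt_mem_nhds (by norm_num : (1:ℝ)/2 < 1))).exists_forall_of_atTop
  have hfin : ∀ n : ℕ, ∃ δ : ℝ, 0 < δ ∧ ∀ i < n, δ ≤ ‖1 - x * Q ^ i‖ := by
    intro n
    induction n with
    | zero => exact ⟨1, one_pos, fun i hi => absurd hi (Nat.not_lt_zero i)⟩
    | succ n ihn =>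
      obtain ⟨δ, hδ, hle⟩ := ihn
      refine ⟨min δ ‖1 - x * Q ^ n‖, lt_min hδ (norm_pos_iff.2 (hx n)), fun i hi => ?_⟩
      rcases Nat.lt_or_ge i n with h | h
      · exact le_trans (min_le_left _ _) (hle i h)
      · have : i = n := by omega
        subst this
        exact min_le_right _ _
  obtain ⟨δ, hδ, hle⟩ := hfin N
  refine ⟨min δ (1/2), lt_min hδ (by norm_num), fun i => ?_⟩
  rcases Nat.lt_or_ge i N with h | h
  · exact le_trans (min_le_left _ _) (hle i h)
  · exact le_trans (min_le_right _ _) (hN i h).le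

theorem stmt5 (q c : ℂ) (hq : ‖q‖ < 1) (hc : ∀ i : ℕ, c ^ 2 * q ^ (2 * i) ≠ 1) :
    ∀ z : ℂ, ‖z‖ < 1 →
      (1 / ∏' k : ℕ, (1 - z * q ^ (2 * k))) *
          ∑' i : ℕ, (-z) ^ i * q ^ (i * (i + 1)) /
            (qPoch (q ^ 2) (q ^ 2) i * (1 - c ^ 2 * q ^ (2 * i))) =
        ∑' n : ℕ, z ^ n / qPoch (c ^ 2) (q ^ 2) (n + 1) := by
  intro z hz
  set Q : ℂ := q ^ 2 with hQdef
  have hQ : ‖Q‖ < 1 := by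
    rw [hQdef, norm_pow]
    exact pow_lt_one₀ (norm_nonneg q) hq (by norm_num)
  have hQpow : ∀ i : ℕ, q ^ (2 * i) = Q ^ i := fun i => pow_mul q 2 i
  have hx : ∀ i : ℕ, 1 - c ^ 2 * Q ^ i ≠ 0 := by
    intro i
    rw [← hQpow i]
    exact sub_ne_zero.2 fun h => hc i h.symm
  -- rewrite the infinite product
  have hprodeq : (∏' k : ℕ, (1 - z * q ^ (2 * k))) = ∏' k : ℕ, (1 - z * Q ^ k) :=
    tprod_congr fun k => by rw [hQpow k]
  -- Euler
  have heuler := my_euler hQ hz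
  have hP : (∏' k : ℕ, (1 - z * Q ^ k)) ≠ 0 := left_ne_zero_of_mul_eq_one heuler
  have hFP : 1 / (∏' k : ℕ, (1 - z * Q ^ k)) = ∑' m : ℕ, z ^ m / qPoch Q Q m := by
    rw [div_eq_iff hP]
    rw [mul_comm] at heuler
    exact heuler.symm
  rw [hprodeq, hFP]
  -- summability of the two factors
  have hFnorm : Summable fun m : ℕ => ‖z ^ m / qPoch Q Q m‖ := my_summable_norm_a hQ hz
  obtain ⟨C, hC, hCle⟩ := my_poch_lb hQ
  obtain ⟨δ, hδ, hδle⟩ := my_unif hQ hx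
  have hGnorm : Summable fun i : ℕ =>
      ‖(-z) ^ i * q ^ (i * (i + 1)) / (qPoch Q Q i * (1 - c ^ 2 * q ^ (2 * i)))‖ := by
    refine Summable.of_nonneg_of_le (fun i => norm_nonneg _) (fun i => ?_)
      (((summable_geometric_of_lt_one (norm_nonneg q) hq)).mul_left (C⁻¹ * δ⁻¹))
    simp only [norm_div, norm_mul, norm_pow, norm_neg]
    have h1 : ‖z‖ ^ i ≤ 1 := pow_le_one₀ (norm_nonneg z) hz.le
    have h2 : ‖q‖ ^ (i * (i + 1)) ≤ ‖q‖ ^ i :=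
      pow_le_pow_of_le_one (norm_nonneg q) hq.le (Nat.le_mul_of_pos_right i (by omega))
    have h3 : C ≤ ‖qPoch Q Q i‖ := hCle i
    have h4 : δ ≤ ‖1 - c ^ 2 * q ^ (2 * i)‖ := by rw [hQpow i]; exact hδle i
    have h5 : (0:ℝ) < ‖qPoch Q Q i‖ * ‖1 - c ^ 2 * q ^ (2 * i)‖ := by
      apply mul_pos (lt_of_lt_of_le hC h3) (lt_of_lt_of_le hδ h4)
    rw [div_le_iff₀ h5]
    calc ‖z‖ ^ i * ‖q‖ ^ (i * (i + 1)) ≤ 1 * ‖q‖ ^ i := by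
          apply mul_le_mul h1 h2 (by positivity) one_pos.le
      _ = ‖q‖ ^ i := one_mul _
      _ = C⁻¹ * δ⁻¹ * ‖q‖ ^ i * (C * δ) := by field_simp
      _ ≤ C⁻¹ * δ⁻¹ * ‖q‖ ^ i * (‖qPoch Q Q i‖ * ‖1 - c ^ 2 * q ^ (2 * i)‖) := by
          apply mul_le_mul_of_nonneg_left (mul_le_mul h3 h4 hδ.le (norm_nonneg _))
            (by positivity)
  -- Cauchy product
  rw [tsum_mul_tsum_eq_tsum_sum_range_of_summable_norm hFnorm hGnorm]
  apply tsum_congr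
  intro n
  have key : ∀ k ∈ range (n + 1),
      z ^ (n - k) / qPoch Q Q (n - k) * ((-z) ^ (n - (n - k)) * q ^ ((n - (n - k)) * (n - (n - k) + 1)) /
        (qPoch Q Q (n - (n - k)) * (1 - c ^ 2 * q ^ (2 * (n - (n - k))))))
      = z ^ n * ((-1 : ℂ) ^ k * Q ^ (k * (k + 1) / 2) /
          (qPoch Q Q k * qPoch Q Q (n - k) * (1 - c ^ 2 * Q ^ k))) := by
    intro k hk
    rw [mem_range] at hk
    obtain ⟨m, hm⟩ : ∃ m, n = k + m := ⟨n - k, by omega⟩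
    subst hm
    rw [show k + m - k = m from by omega, show k + m - m = k from by omega, hQpow k]
    have h1 : (-z) ^ k = (-1 : ℂ) ^ k * z ^ k := by rw [neg_pow]
    have h2 : Q ^ (k * (k + 1) / 2) = q ^ (k * (k + 1)) := by
      rw [hQdef, ← pow_mul]
      congr 1
      exact Nat.two_mul_div_two_of_even (Nat.even_mul_succ_self k)
    have hPk := my_poch_ne hQ k
    have hPn := my_poch_ne hQ m
    have hDk := hx k
    rw [h1, ← h2]
    field_simp
    ring
  rw [← Finset.sum_range_reflect (fun k => z ^ k / qPoch Q Q k *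
      ((-z) ^ (n - k) * q ^ ((n - k) * (n - k + 1)) /
        (qPoch Q Q (n - k) * (1 - c ^ 2 * q ^ (2 * (n - k)))))) (n + 1)]
  simp only [Nat.add_sub_cancel]
  rw [sum_congr rfl key, ← mul_sum, my_pf hQ hx n, mul_one_div]
  rfl
end

section
/- Setting c = q^{1/2} in the Bailey pair of Lemma 2.7 and replacing q by q², one obtains the Bailey pair relative to q⁴ in base q⁴: β_n = 2/((-q⁴;q²)_{2n}(q²;q⁴)_{n+1}) and α_n = q^{n(n+1)} ( (-1)^n q^{2n²+n}(1+q^{2n+1})/(1-q²) · Σ_{|j|≤n} q^{-j²} + q^{2n²+n}(1-q^{2n+1})/(1-q²) · Σ_{|j|≤n} (-1)^j q^{-j²} ). -/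
open scoped BigOperators

/-- Infinite q-Pochhammer symbol `(a;q)_∞`. -/
-- auxiliary definitions
noncomputable def gq (q : ℂ) (m : ℕ) : ℂ := ∑ i ∈ Finset.range (m+1), (q^4)^(i*(m-i))

noncomputable def gmq (q : ℂ) : ℕ → ℂ
  | 0 => 0
  | j+1 => gq q j

noncomputable def ccq (q : ℂ) (j : ℕ) : ℂ := gq q j + (q^4)^j * gmq q j

noncomputable def fq (q : ℂ) (j : ℕ) : ℂ := (-1)^j * q^(2*j*(j+1)) * ccq q j

noncomputable def Bq (q : ℂ) (m : ℕ) (k : ℤ) : ℂ :=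
  if 0 ≤ k ∧ k ≤ (m:ℤ) then
    qPoch (q^4) (q^4) m / (qPoch (q^4) (q^4) k.toNat * qPoch (q^4) (q^4) (m - k.toNat))
  else 0

lemma one_sub_ne_zero {z : ℂ} (h : ‖z‖ < 1) : (1:ℂ) - z ≠ 0 := by
  intro h0
  have hz : z = 1 := by linear_combination -h0
  rw [hz] at h; simp at h

lemma pow_norm_lt {q : ℂ} (hq : ‖q‖ < 1) {k : ℕ} (hk : k ≠ 0) : ‖q^k‖ < 1 := by
  rw [norm_pow]
  calc ‖q‖ ^ k < 1 ^ k := by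
        apply pow_lt_pow_left₀ hq (norm_nonneg q) hk
    _ = 1 := one_pow k

lemma sub_pow_ne {q : ℂ} (hq : ‖q‖ < 1) {k : ℕ} (hk : k ≠ 0) : (1:ℂ) - q^k ≠ 0 :=
  one_sub_ne_zero (pow_norm_lt hq hk)

lemma add_pow_ne {q : ℂ} (hq : ‖q‖ < 1) {k : ℕ} (hk : k ≠ 0) : (1:ℂ) + q^k ≠ 0 := by
  have : (1:ℂ) + q^k = 1 - (-(q^k)) := by ring
  rw [this]
  exact one_sub_ne_zero (by rw [norm_neg]; exact pow_norm_lt hq hk)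

lemma qPoch_pos_ne {q : ℂ} (hq : ‖q‖ < 1) {c d : ℕ} (hc : c ≠ 0) (m : ℕ) :
    qPoch (q^c) (q^d) m ≠ 0 := by
  unfold qPoch
  rw [Finset.prod_ne_zero_iff]
  intro k _
  have h1 : q^c * (q^d)^k = q^(c+d*k) := by rw [← pow_mul, ← pow_add]
  rw [h1]
  exact sub_pow_ne hq (by omega)

lemma qPoch_neg_ne {q : ℂ} (hq : ‖q‖ < 1) {c d : ℕ} (hc : c ≠ 0) (m : ℕ) :
    qPoch (-(q^c)) (q^d) m ≠ 0 := by
  unfold qPoch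
  rw [Finset.prod_ne_zero_iff]
  intro k _
  have h1 : (1:ℂ) - (-(q^c)) * (q^d)^k = 1 + q^(c+d*k) := by
    rw [← pow_mul, neg_mul, sub_neg_eq_add, ← pow_add]
  rw [h1]
  exact add_pow_ne hq (by omega)

lemma qPoch_succ (a q : ℂ) (n : ℕ) :
    qPoch a q (n+1) = qPoch a q n * (1 - a * q ^ n) := Finset.prod_range_succ _ _

lemma qPoch_succ' (a q : ℂ) (n : ℕ) :
    qPoch a q (n+1) = (1 - a) * qPoch (a*q) q n := by
  unfold qPoch
  rw [Finset.prod_range_succ']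
  rw [mul_comm]
  congr 1
  · simp
  · apply Finset.prod_congr rfl
    intro k _
    rw [pow_succ']
    ring

lemma gq_zero (q : ℂ) : gq q 0 = 1 := by simp [gq]

lemma gq_one (q : ℂ) : gq q 1 = 2 := by
  unfold gq
  rw [Finset.sum_range_succ, Finset.sum_range_succ]
  norm_num

lemma gq_rec (q : ℂ) (m : ℕ) : gq q (m+2) = (q^4)^(m+1) * gq q m + 2 := by
  unfold gq
  rw [Finset.sum_range_succ]
  rw [Finset.sum_range_succ']
  have h1 : ∀ i ∈ Finset.range (m+1), (q^4)^((i+1)*(m+2-(i+1))) = (q^4)^(m+1) * (q^4)^(i*(m-i)) := by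
    intro i hi
    rw [Finset.mem_range] at hi
    obtain ⟨k, rfl⟩ : ∃ k, m = i + k := ⟨m - i, by omega⟩
    have e1 : i + 2 - (i+1) = 1 := by omega
    have e2 : (i+1)*(i+k+2-(i+1)) = (i+k+1) + i*(i+k-i) := by
      have e3 : i+k+2-(i+1) = k+1 := by omega
      have e4 : i+k-i = k := by omega
      rw [e3, e4]; ring
    rw [e2, pow_add]
  rw [Finset.sum_congr rfl h1, ← Finset.mul_sum]
  have e5 : (m+2)*(m+2-(m+2)) = 0 := by simp
  rw [e5]
  ring

lemma gq_rec' (q : ℂ) (j : ℕ) : gq q (j+1) = (q^4)^j * gmq q j + 2 := by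
  cases j with
  | zero => simp [gq_one, gmq]
  | succ m => rw [gq_rec]; rfl

lemma Bq_eq (q : ℂ) (a b : ℕ) :
    Bq q (a+b) (a:ℤ) = qPoch (q^4) (q^4) (a+b) / (qPoch (q^4) (q^4) a * qPoch (q^4) (q^4) b) := by
  unfold Bq
  have hc : 0 ≤ (a:ℤ) ∧ (a:ℤ) ≤ ((a+b:ℕ):ℤ) :=
    ⟨by positivity, by exact_mod_cast Nat.le_add_right a b⟩
  rw [if_pos hc]
  norm_num

lemma Bq_neg (q : ℂ) (m : ℕ) (k : ℤ) (h : k < 0) : Bq q m k = 0 := by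
  unfold Bq
  rw [if_neg]
  rintro ⟨h1, -⟩
  omega

lemma Bq_zero (q : ℂ) (hq : ‖q‖ < 1) (m : ℕ) : Bq q m (0:ℤ) = 1 := by
  have h := Bq_eq q 0 m
  simp only [Nat.zero_add, Nat.cast_zero] at h
  rw [h]
  have h0 : qPoch (q^4) (q^4) 0 = 1 := by simp [qPoch]
  have hm : qPoch (q^4) (q^4) m ≠ 0 := qPoch_pos_ne hq (by norm_num) m
  rw [h0, one_mul, div_self hm]

lemma Bq_mid (q : ℂ) (n : ℕ) : Bq q (2*n+1) ((n:ℤ)+1) = Bq q (2*n+1) (n:ℤ) := by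
  have h1 : Bq q ((n+1)+n) ((n+1:ℕ):ℤ) = _ := Bq_eq q (n+1) n
  have h2 : Bq q (n+(n+1)) ((n:ℕ):ℤ) = _ := Bq_eq q n (n+1)
  have e1 : (n+1)+n = 2*n+1 := by omega
  have e2 : n+(n+1) = 2*n+1 := by omega
  rw [e1] at h1; rw [e2] at h2
  rw [show ((n:ℤ)+1) = ((n+1:ℕ):ℤ) by push_cast; ring, h1, h2]
  ring

lemma relA (q : ℂ) (hq : ‖q‖ < 1) (a b : ℕ) :
    (1 - (q^4)^(a+1)) * Bq q (a+1+b) ((a:ℤ)+1) = (1 - (q^4)^(b+1)) * Bq q (a+1+b) (a:ℤ) := by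
  have h1 : Bq q ((a+1)+b) ((a+1:ℕ):ℤ) = _ := Bq_eq q (a+1) b
  have h2 : Bq q (a+(b+1)) ((a:ℕ):ℤ) = _ := Bq_eq q a (b+1)
  have e2 : a+(b+1) = a+1+b := by omega
  rw [e2] at h2
  rw [show ((a:ℤ)+1) = ((a+1:ℕ):ℤ) by push_cast; ring, h1, h2]
  have hsa : qPoch (q^4) (q^4) (a+1) = qPoch (q^4) (q^4) a * (1 - (q^4)^(a+1)) := by
    rw [qPoch_succ, ← pow_succ']
  have hsb : qPoch (q^4) (q^4) (b+1) = qPoch (q^4) (q^4) b * (1 - (q^4)^(b+1)) := by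
    rw [qPoch_succ, ← pow_succ']
  rw [hsa, hsb]
  have na : qPoch (q^4) (q^4) a ≠ 0 := qPoch_pos_ne hq (by norm_num) a
  have nb : qPoch (q^4) (q^4) b ≠ 0 := qPoch_pos_ne hq (by norm_num) b
  have n1 : (1 - (q^4)^(a+1)) ≠ 0 := by
    rw [show (q^4)^(a+1) = q^(4*(a+1)) by rw [← pow_mul]]
    exact sub_pow_ne hq (by omega)
  have n2 : (1 - (q^4)^(b+1)) ≠ 0 := by
    rw [show (q^4)^(b+1) = q^(4*(b+1)) by rw [← pow_mul]]
    exact sub_pow_ne hq (by omega)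
  field_simp

lemma relTop (q : ℂ) (hq : ‖q‖ < 1) (a b : ℕ) :
    Bq q (a+b+2) (a:ℤ) * ((1 - (q^4)^(b+1)) * (1 - (q^4)^(b+2)))
      = Bq q (a+b) (a:ℤ) * ((1 - (q^4)^(a+b+1)) * (1 - (q^4)^(a+b+2))) := by
  have h1 : Bq q (a+(b+2)) ((a:ℕ):ℤ) = _ := Bq_eq q a (b+2)
  have h2 : Bq q (a+b) ((a:ℕ):ℤ) = _ := Bq_eq q a b
  have e1 : a+(b+2) = a+b+2 := by omega
  rw [e1] at h1
  rw [h1, h2]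
  have hsb : qPoch (q^4) (q^4) (b+2)
      = qPoch (q^4) (q^4) b * (1 - (q^4)^(b+1)) * (1 - (q^4)^(b+2)) := by
    rw [qPoch_succ, qPoch_succ, ← pow_succ', ← pow_succ']
  have hst : qPoch (q^4) (q^4) (a+b+2)
      = qPoch (q^4) (q^4) (a+b) * (1 - (q^4)^(a+b+1)) * (1 - (q^4)^(a+b+2)) := by
    rw [qPoch_succ, qPoch_succ, ← pow_succ', ← pow_succ']
  rw [hsb, hst]
  have na : qPoch (q^4) (q^4) a ≠ 0 := qPoch_pos_ne hq (by norm_num) a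
  have nb : qPoch (q^4) (q^4) b ≠ 0 := qPoch_pos_ne hq (by norm_num) b
  have n1 : (1 - (q^4)^(b+1)) ≠ 0 := by
    rw [show (q^4)^(b+1) = q^(4*(b+1)) by rw [← pow_mul]]
    exact sub_pow_ne hq (by omega)
  have n2 : (1 - (q^4)^(b+2)) ≠ 0 := by
    rw [show (q^4)^(b+2) = q^(4*(b+2)) by rw [← pow_mul]]
    exact sub_pow_ne hq (by omega)
  field_simp

lemma gmq_succ (q : ℂ) (j : ℕ) : gmq q (j+1) = gq q j := rfl

noncomputable def Gq (q : ℂ) (n j : ℕ) : ℂ :=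
  (-1)^j * q^(2*j*(j-1)) * (q^4)^(n+1) *
    ( ccq q j * Bq q (2*n+1) ((n:ℤ)+1-(j:ℕ))
      + (q^4)^j * (gq q j + (q^4)^(n+1+j) * gmq q j - 2) * Bq q (2*n+1) ((n:ℤ)-(j:ℕ)) )

lemma Gq_zero (q : ℂ) (n : ℕ) : Gq q n 0 = 0 := by
  unfold Gq
  rw [show (n:ℤ)+1-((0:ℕ):ℤ) = (n:ℤ)+1 by push_cast; ring,
      show (n:ℤ)-((0:ℕ):ℤ) = (n:ℤ) by push_cast; ring]
  rw [Bq_mid q n]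
  simp only [ccq, gq_zero, gmq]
  ring

lemma Gq_top (q : ℂ) (n : ℕ) : Gq q n (n+2) = 0 := by
  unfold Gq
  rw [show (n:ℤ)+1-((n+2:ℕ):ℤ) = -1 by push_cast; ring,
      show (n:ℤ)-((n+2:ℕ):ℤ) = -2 by push_cast; ring,
      Bq_neg q _ _ (by norm_num), Bq_neg q _ _ (by norm_num)]
  ring

lemma step_j (q : ℂ) (hq : ‖q‖ < 1) (n j : ℕ) (hj : j ≤ n + 1) :
    fq q j * Bq q (2*n+3) ((n:ℤ)+1-(j:ℕ))
      = (1 - (q^4)^(n+1)) * (fq q j * Bq q (2*n+1) ((n:ℤ)-(j:ℕ)))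
        + (Gq q n j - Gq q n (j+1)) := by
  rcases Nat.lt_or_ge j (n+1) with hlt | hge
  · -- main case : j ≤ n
    obtain ⟨m, rfl⟩ : ∃ m, n = j + m := ⟨n - j, by omega⟩
    have i1 : ((j+m:ℕ):ℤ)+1-(j:ℕ) = (m:ℤ)+1 := by push_cast; ring
    have i2 : ((j+m:ℕ):ℤ)-(j:ℕ) = (m:ℤ) := by push_cast; ring
    have i3 : ((j+m:ℕ):ℤ)+1-((j+1:ℕ):ℤ) = (m:ℤ) := by push_cast; ring
    have i4 : ((j+m:ℕ):ℤ)-((j+1:ℕ):ℤ) = (m:ℤ)-1 := by push_cast; ring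
    unfold Gq
    rw [i1, i2, i3, i4]
    have hQpow : ∀ k : ℕ, k ≠ 0 → (1 - (q^4)^k) ≠ 0 := by
      intro k hk
      rw [show (q^4)^k = q^(4*k) by rw [← pow_mul]]
      exact sub_pow_ne hq (by omega)
    have n0 : (1 - (q^4)^(m+1)) ≠ 0 := hQpow _ (by omega)
    have n1 : (1 - (q^4)^(m+2*j+1)) ≠ 0 := hQpow _ (by omega)
    have n2 : (1 - (q^4)^(m+2*j+2)) ≠ 0 := hQpow _ (by omega)
    -- relation e1
    have e1 := relA q hq m (m+2*j)
    rw [show m+1+(m+2*j) = 2*(j+m)+1 by ring] at e1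
    -- relation e2
    have e2 : (1 - (q^4)^m) * Bq q (2*(j+m)+1) ((m:ℕ):ℤ)
        = (1 - (q^4)^(m+2*j+2)) * Bq q (2*(j+m)+1) ((m:ℤ)-1) := by
      cases m with
      | zero =>
          rw [Bq_neg q _ _ (show ((0:ℕ):ℤ)-1 < 0 by norm_num)]
          simp
      | succ k =>
          have h := relA q hq k (2*j+k+2)
          rw [show k+1+(2*j+k+2) = 2*(j+(k+1))+1 by ring] at h
          have c2 : ((k+1:ℕ):ℤ)-1 = ((k:ℕ):ℤ) := by push_cast; ring
          rw [c2]
          have c1 : ((k+1:ℕ):ℤ) = (k:ℤ)+1 := by push_cast; ring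
          rw [c1]
          rw [show k+1+2*j+2 = 2*j+k+2+1 by ring]
          rw [show k+1 = k+1 by rfl]
          exact h
    -- relation e3
    have e3 := relTop q hq (m+1) (m+2*j)
    rw [show (m+1)+(m+2*j)+2 = 2*(j+m)+3 by ring,
        show (m+1)+(m+2*j)+1 = 2*(j+m)+2 by ring,
        show (m+1)+(m+2*j) = 2*(j+m)+1 by ring] at e3
    push_cast at e3
    -- division forms
    have hb1 : Bq q (2*(j+m)+1) ((m:ℤ)+1)
        = (1-(q^4)^(m+2*j+1)) * Bq q (2*(j+m)+1) ((m:ℕ):ℤ) / (1-(q^4)^(m+1)) := by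
      rw [eq_div_iff n0]; linear_combination e1
    have hbm : Bq q (2*(j+m)+1) ((m:ℤ)-1)
        = (1-(q^4)^m) * Bq q (2*(j+m)+1) ((m:ℕ):ℤ) / (1-(q^4)^(m+2*j+2)) := by
      rw [eq_div_iff n2]; linear_combination -e2
    have hB3 : Bq q (2*(j+m)+3) ((m:ℤ)+1)
        = Bq q (2*(j+m)+1) ((m:ℤ)+1) * ((1-(q^4)^(2*(j+m)+2)) * (1-(q^4)^(2*(j+m)+3)))
            / ((1-(q^4)^(m+2*j+1)) * (1-(q^4)^(m+2*j+2))) := by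
      rw [eq_div_iff (mul_ne_zero n1 n2)]; linear_combination e3
    rw [hB3, hb1, hbm]
    simp only [ccq, gmq_succ]
    rw [gq_rec' q j]
    unfold fq ccq
    cases j with
    | zero =>
        simp only [gmq, Nat.zero_sub, Nat.mul_zero, Nat.zero_mul, pow_zero]
        field_simp
        ring
    | succ i =>
        simp only [gmq_succ, Nat.add_sub_cancel]
        field_simp
        ring
  · -- boundary case : j = n+1
    have hj1 : j = n+1 := by omega
    subst hj1
    rw [show (n:ℤ)+1-((n+1:ℕ):ℤ) = 0 by push_cast; ring,
        show (n:ℤ)-((n+1:ℕ):ℤ) = -1 by push_cast; ring,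
        Bq_zero q hq, Bq_neg q _ _ (by norm_num)]
    unfold Gq
    rw [show (n:ℤ)+1-((n+1:ℕ):ℤ) = 0 by push_cast; ring,
        show (n:ℤ)-((n+1:ℕ):ℤ) = -1 by push_cast; ring,
        show (n:ℤ)+1-((n+1+1:ℕ):ℤ) = -1 by push_cast; ring,
        show (n:ℤ)-((n+1+1:ℕ):ℤ) = -2 by push_cast; ring,
        Bq_zero q hq, Bq_neg q _ _ (show (-1:ℤ) < 0 by norm_num),
        Bq_neg q _ _ (show (-2:ℤ) < 0 by norm_num)]
    unfold fq
    simp only [Nat.add_sub_cancel]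
    ring

lemma main_sum (q : ℂ) (hq : ‖q‖ < 1) (n : ℕ) :
    ∑ j ∈ Finset.range (n+1), fq q j * Bq q (2*n+1) ((n:ℤ)-(j:ℕ)) = qPoch (q^4) (q^4) n := by
  induction n with
  | zero =>
      rw [Finset.sum_range_one]
      rw [show ((0:ℕ):ℤ)-((0:ℕ):ℤ) = 0 by norm_num]
      rw [Bq_zero q hq]
      simp [fq, ccq, gq_zero, gmq, qPoch]
  | succ n ih =>
      have hcast : ∀ j : ℕ,
          fq q j * Bq q (2*(n+1)+1) (((n+1:ℕ):ℤ)-(j:ℕ))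
            = fq q j * Bq q (2*n+3) ((n:ℤ)+1-(j:ℕ)) := by
        intro j
        rw [show 2*(n+1)+1 = 2*n+3 by ring,
            show ((n+1:ℕ):ℤ)-(j:ℕ) = (n:ℤ)+1-(j:ℕ) by push_cast; ring]
      rw [Finset.sum_congr rfl (fun j _ => hcast j)]
      have hstep : ∀ j ∈ Finset.range (n+2),
          fq q j * Bq q (2*n+3) ((n:ℤ)+1-(j:ℕ))
            = (1 - (q^4)^(n+1)) * (fq q j * Bq q (2*n+1) ((n:ℤ)-(j:ℕ)))
              + (Gq q n j - Gq q n (j+1)) := by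
        intro j hj
        rw [Finset.mem_range] at hj
        exact step_j q hq n j (by omega)
      rw [Finset.sum_congr rfl hstep, Finset.sum_add_distrib, ← Finset.mul_sum,
          Finset.sum_range_sub' (fun j => Gq q n j), Gq_zero q n, Gq_top q n]
      rw [Finset.sum_range_succ]
      rw [show (n:ℤ)-((n+1:ℕ):ℤ) = -1 by push_cast; ring,
          Bq_neg q _ _ (show (-1:ℤ) < 0 by norm_num)]
      rw [mul_zero, add_zero, ih]
      rw [qPoch_succ, ← pow_succ']
      ring

lemma Icc_split (n : ℕ) (F : ℤ → ℂ) :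
    ∑ k ∈ Finset.Icc (-((n+1:ℕ):ℤ)) ((n+1:ℕ):ℤ), F k
      = F (-((n+1:ℕ):ℤ)) + F ((n+1:ℕ):ℤ) + ∑ k ∈ Finset.Icc (-(n:ℤ)) (n:ℤ), F k := by
  have hset : Finset.Icc (-((n+1:ℕ):ℤ)) ((n+1:ℕ):ℤ)
      = insert (-((n+1:ℕ):ℤ)) (insert ((n+1:ℕ):ℤ) (Finset.Icc (-(n:ℤ)) (n:ℤ))) := by
    ext x
    simp only [Finset.mem_Icc, Finset.mem_insert]
    push_cast
    omega
  rw [hset, Finset.sum_insert, Finset.sum_insert]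
  · ring
  · simp only [Finset.mem_Icc]
    push_cast
    omega
  · simp only [Finset.mem_insert, Finset.mem_Icc]
    push_cast
    omega

lemma negone_zpow_neg (m : ℤ) : ((-1:ℂ))^(-m) = ((-1:ℂ))^m := by
  have h : ((-1:ℂ))^m * ((-1:ℂ))^m = 1 := by
    rw [← zpow_add₀ (by norm_num : (-1:ℂ) ≠ 0), show m+m = 2*m by ring, zpow_mul]
    norm_num
  rw [zpow_neg]
  exact inv_eq_of_mul_eq_one_left h

lemma theta (q : ℂ) (hq0 : q ≠ 0) (n : ℕ) :
    ((∑ k ∈ Finset.Icc (-(n:ℤ)) (n:ℤ), q^(-k^2))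
        + (-1)^n * (∑ k ∈ Finset.Icc (-(n:ℤ)) (n:ℤ), ((-1:ℂ))^k * q^(-k^2))
      = 2 * q^(-((n:ℤ))^2) * gq q n)
  ∧ ((∑ k ∈ Finset.Icc (-(n:ℤ)) (n:ℤ), q^(-k^2))
        - (-1)^n * (∑ k ∈ Finset.Icc (-(n:ℤ)) (n:ℤ), ((-1:ℂ))^k * q^(-k^2))
      = 2 * q^(-((n:ℤ)-1)^2) * gmq q n) := by
  induction n with
  | zero =>
      constructor
      · simp [gq_zero]
        norm_num
      · simp [gmq]
  | succ n ih =>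
      obtain ⟨ihA, ihB⟩ := ih
      have hs : ((-1:ℂ))^(n+1) * ((-1:ℂ))^(n+1) = 1 := by
        rw [← pow_add, show (n+1)+(n+1) = 2*(n+1) by ring, pow_mul]
        norm_num
      have key : q^(-(((n+1:ℕ)):ℤ)^2) * (q^4)^n = q^(-((n:ℤ)-1)^2) := by
        rw [show ((q:ℂ)^4)^n = q^((4*n:ℕ):ℤ) by rw [zpow_natCast, ← pow_mul],
            ← zpow_add₀ hq0]
        congr 1
        push_cast
        ring
      have hA2 := Icc_split n (fun k => q^(-k^2))
      have hB2 := Icc_split n (fun k => ((-1:ℂ))^k * q^(-k^2))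
      rw [show (-(-((n+1:ℕ):ℤ))^2) = (-(((n+1:ℕ):ℤ))^2) by ring] at hA2 hB2
      rw [show ((-1:ℂ))^(-((n+1:ℕ):ℤ)) = ((-1:ℂ))^(n+1) by
            rw [negone_zpow_neg, zpow_natCast],
          show ((-1:ℂ))^(((n+1:ℕ)):ℤ) = ((-1:ℂ))^(n+1) by rw [zpow_natCast]] at hB2
      constructor
      · rw [hA2, hB2, gq_rec' q n]
        linear_combination ihB + 2*(q^(-(((n+1:ℕ)):ℤ)^2))*hs - 2*(gmq q n)*key
      · rw [hA2, hB2, gmq_succ]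
        have key2 : q^(-((((n+1:ℕ)):ℤ)-1)^2) = q^(-((n:ℤ))^2) := by
          congr 1
          push_cast
          ring
        rw [key2]
        linear_combination ihA - 2*(q^(-(((n+1:ℕ)):ℤ)^2))*hs

lemma alpha_eq (q : ℂ) (hq : ‖q‖ < 1) (hq0 : q ≠ 0) (n : ℕ) :
    q ^ (n * (n + 1)) *
        ((-1 : ℂ) ^ n * q ^ (2 * n ^ 2 + n) * (1 + q ^ (2 * n + 1)) / (1 - q ^ 2) *
            ∑ j ∈ Finset.Icc (-(n : ℤ)) (n : ℤ), q ^ (-j ^ 2) +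
          q ^ (2 * n ^ 2 + n) * (1 - q ^ (2 * n + 1)) / (1 - q ^ 2) *
            ∑ j ∈ Finset.Icc (-(n : ℤ)) (n : ℤ), (-1 : ℂ) ^ j * q ^ (-j ^ 2))
      = 2 / (1 - q ^ 2) * fq q n := by
  have h2 : (1 - q^2) ≠ 0 := sub_pow_ne hq (by norm_num)
  obtain ⟨hA, hB⟩ := theta q hq0 n
  set T : ℂ := ∑ j ∈ Finset.Icc (-(n : ℤ)) (n : ℤ), q ^ (-j ^ 2) with hTdef
  set T' : ℂ := ∑ j ∈ Finset.Icc (-(n : ℤ)) (n : ℤ), (-1 : ℂ) ^ j * q ^ (-j ^ 2) with hT'def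
  have hs : ((-1:ℂ))^n * ((-1:ℂ))^n = 1 := by
    rw [← pow_add, show n+n = 2*n by ring, pow_mul]
    norm_num
  have hT : T = q^(-(n:ℤ)^2) * gq q n + q^(-((n:ℤ)-1)^2) * gmq q n := by
    linear_combination hA/2 + hB/2
  have hT' : T' = (-1:ℂ)^n * (q^(-(n:ℤ)^2) * gq q n) - (-1:ℂ)^n * (q^(-((n:ℤ)-1)^2) * gmq q n) := by
    linear_combination ((-1:ℂ)^n/2)*hA - ((-1:ℂ)^n/2)*hB - T'*hs
  have K1 : q^(n*(n+1)) * q^(2*n^2+n) * q^(-(n:ℤ)^2) = q^(2*n*(n+1)) := by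
    rw [show (q:ℂ)^(n*(n+1)) = q^((n*(n+1):ℕ):ℤ) by rw [zpow_natCast],
        show (q:ℂ)^(2*n^2+n) = q^((2*n^2+n:ℕ):ℤ) by rw [zpow_natCast],
        show (q:ℂ)^(2*n*(n+1)) = q^((2*n*(n+1):ℕ):ℤ) by rw [zpow_natCast],
        ← zpow_add₀ hq0, ← zpow_add₀ hq0]
    congr 1
    push_cast
    ring
  have K2 : q^(n*(n+1)) * q^(2*n^2+n) * q^(2*n+1) * q^(-((n:ℤ)-1)^2)
      = q^(2*n*(n+1)) * (q^4)^n := by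
    rw [show (q:ℂ)^(n*(n+1)) = q^((n*(n+1):ℕ):ℤ) by rw [zpow_natCast],
        show (q:ℂ)^(2*n^2+n) = q^((2*n^2+n:ℕ):ℤ) by rw [zpow_natCast],
        show (q:ℂ)^(2*n+1) = q^((2*n+1:ℕ):ℤ) by rw [zpow_natCast],
        show ((q:ℂ)^4)^n = q^((4*n:ℕ):ℤ) by rw [zpow_natCast, ← pow_mul],
        show (q:ℂ)^(2*n*(n+1)) = q^((2*n*(n+1):ℕ):ℤ) by rw [zpow_natCast],
        ← zpow_add₀ hq0, ← zpow_add₀ hq0, ← zpow_add₀ hq0, ← zpow_add₀ hq0]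
    congr 1
    push_cast
    ring
  rw [hT, hT']
  unfold fq ccq
  simp only [div_eq_mul_inv]
  linear_combination (2*(1-q^2)⁻¹*((-1:ℂ)^n)*(gq q n))*K1
    + (2*(1-q^2)⁻¹*((-1:ℂ)^n)*(gmq q n))*K2

lemma split2n (q : ℂ) (n : ℕ) :
    qPoch (-(q^4)) (q^2) (2*n) = qPoch (-(q^4)) (q^4) n * qPoch (-(q^6)) (q^4) n := by
  induction n with
  | zero => simp [qPoch]
  | succ n ih =>
      rw [show 2*(n+1) = (2*n+1)+1 by ring, qPoch_succ, show 2*n+1 = (2*n)+1 from rfl,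
          qPoch_succ, qPoch_succ, qPoch_succ, ih]
      ring

lemma p2split (q : ℂ) (n : ℕ) :
    qPoch (q^2) (q^4) (n+1) = (1-q^2) * qPoch (q^6) (q^4) n := by
  rw [qPoch_succ', show (q:ℂ)^2*q^4 = q^6 by ring]

lemma prodId (q : ℂ) (n : ℕ) :
    (1 - q^4) * qPoch (q^4) (q^4) n *
        (qPoch (-(q^4)) (q^4) n * qPoch (-(q^6)) (q^4) n * qPoch (q^6) (q^4) n)
      = qPoch (q^4) (q^4) (2*n+1) := by
  induction n with
  | zero => simp [qPoch]
  | succ n ih =>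
      rw [show 2*(n+1)+1 = ((2*n+1)+1)+1 by ring, qPoch_succ, qPoch_succ,
          qPoch_succ, qPoch_succ, qPoch_succ, qPoch_succ, ← ih]
      ring

lemma term_eq (q : ℂ) (hq : ‖q‖ < 1) (hq0 : q ≠ 0) (n j : ℕ) (hj : j ≤ n) :
    (2 / (1 - q ^ 2) * fq q j) / (qPoch (q^4) (q^4) (n-j) * qPoch (q^4*q^4) (q^4) (n+j))
      = (2*(1-q^4)/((1-q^2) * qPoch (q^4) (q^4) (2*n+1)))
          * (fq q j * Bq q (2*n+1) ((n:ℤ)-(j:ℕ))) := by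
  have h2 : (1 - q^2) ≠ 0 := sub_pow_ne hq (by norm_num)
  have h4 : (1 - q^4) ≠ 0 := sub_pow_ne hq (by norm_num)
  have np1 : qPoch (q^4) (q^4) (n-j) ≠ 0 := qPoch_pos_ne hq (by norm_num) _
  have np2 : qPoch (q^4) (q^4) (n+j+1) ≠ 0 := qPoch_pos_ne hq (by norm_num) _
  have npt : qPoch (q^4) (q^4) (2*n+1) ≠ 0 := qPoch_pos_ne hq (by norm_num) _
  have h1 : qPoch (q^4*q^4) (q^4) (n+j) = qPoch (q^4) (q^4) (n+j+1) / (1-q^4) := by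
    rw [qPoch_succ' (q^4) (q^4) (n+j)]
    field_simp
  have hB : Bq q (2*n+1) ((n:ℤ)-(j:ℕ))
      = qPoch (q^4) (q^4) (2*n+1) / (qPoch (q^4) (q^4) (n-j) * qPoch (q^4) (q^4) (n+j+1)) := by
    have h := Bq_eq q (n-j) (n+j+1)
    rw [show (n-j)+(n+j+1) = 2*n+1 by omega] at h
    rw [show ((n:ℤ))-(j:ℕ) = (((n-j:ℕ)):ℤ) by push_cast [Nat.cast_sub hj]; ring]
    exact h
  rw [h1, hB]
  field_simp

theorem stmt7 (q : ℂ) (hq : ‖q‖ < 1) (hq0 : q ≠ 0) :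
    IsBaileyPair (q ^ 4) (q ^ 4)
      (fun n => q ^ (n * (n + 1)) *
        ((-1 : ℂ) ^ n * q ^ (2 * n ^ 2 + n) * (1 + q ^ (2 * n + 1)) / (1 - q ^ 2) *
            ∑ j ∈ Finset.Icc (-(n : ℤ)) (n : ℤ), q ^ (-j ^ 2) +
          q ^ (2 * n ^ 2 + n) * (1 - q ^ (2 * n + 1)) / (1 - q ^ 2) *
            ∑ j ∈ Finset.Icc (-(n : ℤ)) (n : ℤ), (-1 : ℂ) ^ j * q ^ (-j ^ 2)))
      (fun n => 2 / (qPoch (-(q ^ 4)) (q ^ 2) (2 * n) * qPoch (q ^ 2) (q ^ 4) (n + 1))) := by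
  unfold IsBaileyPair
  intro n
  simp only []
  have hterm : ∀ j ∈ Finset.range (n+1),
      (q ^ (j * (j + 1)) *
        ((-1 : ℂ) ^ j * q ^ (2 * j ^ 2 + j) * (1 + q ^ (2 * j + 1)) / (1 - q ^ 2) *
            ∑ k ∈ Finset.Icc (-(j : ℤ)) (j : ℤ), q ^ (-k ^ 2) +
          q ^ (2 * j ^ 2 + j) * (1 - q ^ (2 * j + 1)) / (1 - q ^ 2) *
            ∑ k ∈ Finset.Icc (-(j : ℤ)) (j : ℤ), (-1 : ℂ) ^ k * q ^ (-k ^ 2)))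
        / (qPoch (q^4) (q^4) (n - j) * qPoch (q^4 * q^4) (q^4) (n + j))
      = (2*(1-q^4)/((1-q^2) * qPoch (q^4) (q^4) (2*n+1)))
          * (fq q j * Bq q (2*n+1) ((n:ℤ)-(j:ℕ))) := by
    intro j hj
    rw [Finset.mem_range] at hj
    rw [alpha_eq q hq hq0 j]
    exact term_eq q hq hq0 n j (by omega)
  rw [Finset.sum_congr rfl hterm, ← Finset.mul_sum, main_sum q hq n]
  rw [split2n, p2split, ← prodId]
  have h2 : (1 - q^2) ≠ 0 := sub_pow_ne hq (by norm_num)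
  have h4 : (1 - q^4) ≠ 0 := sub_pow_ne hq (by norm_num)
  have np : qPoch (q^4) (q^4) n ≠ 0 := qPoch_pos_ne hq (by norm_num) _
  have na : qPoch (-(q^4)) (q^4) n ≠ 0 := qPoch_neg_ne hq (by norm_num) _
  have nb : qPoch (-(q^6)) (q^4) n ≠ 0 := qPoch_neg_ne hq (by norm_num) _
  have nc : qPoch (q^6) (q^4) n ≠ 0 := qPoch_pos_ne hq (by norm_num) _
  rw [div_mul_eq_mul_div, div_eq_div_iff
    (by exact mul_ne_zero (mul_ne_zero na nb) (mul_ne_zero h2 nc))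
    (by exact mul_ne_zero h2 (mul_ne_zero (mul_ne_zero h4 np)
      (mul_ne_zero (mul_ne_zero na nb) nc)))]
  ring
end

section
/- G₁(q) := Σ_{n≥0} q^{5n²+4n}(1-q^{2n+1}) Σ_{|j|≤n} (-1)^j q^{-j²} satisfies G₁(q) = f_{8,12,8}(q⁸, q⁸, q) + q⁹ f_{8,12,8}(q^{18}, q^{18}, q), where f_{a,b,c}(x,y,q) = (Σ_{r,s≥0} - Σ_{r,s<0}) (-1)^{r+s} x^r y^s q^{a r(r-1)/2 + b r s + c s(s-1)/2}. -/
open scoped BigOperators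

/-- Hecke-type double sum `f_{a,b,c}(x,y,q)`: the sum over `r,s ≥ 0` minus the sum
over `r,s < 0` of `(-1)^{r+s} x^r y^s q^{ar(r-1)/2+brs+cs(s-1)/2}`. -/
noncomputable def heckeF (a b c : ℤ) (x y q : ℂ) : ℂ :=
  (∑' p : ℕ × ℕ, (-1 : ℂ) ^ (p.1 + p.2) * x ^ p.1 * y ^ p.2 *
      q ^ (a * ((p.1 : ℤ) * ((p.1 : ℤ) - 1) / 2) + b * p.1 * p.2 +
        c * ((p.2 : ℤ) * ((p.2 : ℤ) - 1) / 2))) -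
  (∑' p : ℕ × ℕ, (-1 : ℂ) ^ ((-(p.1 : ℤ) - 1) + (-(p.2 : ℤ) - 1)) *
      x ^ (-(p.1 : ℤ) - 1) * y ^ (-(p.2 : ℤ) - 1) *
      q ^ (a * ((-(p.1 : ℤ) - 1) * ((-(p.1 : ℤ) - 1) - 1) / 2) +
        b * (-(p.1 : ℤ) - 1) * (-(p.2 : ℤ) - 1) +
        c * ((-(p.2 : ℤ) - 1) * ((-(p.2 : ℤ) - 1) - 1) / 2)))

section HeckeAux
open Finset


lemma neg_one_zpow_congr {a b : ℤ} (h : a % 2 = b % 2) : (-1 : ℂ) ^ a = (-1 : ℂ) ^ b := by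
  have h2 : a = b + 2 * ((a - b) / 2) := by omega
  rw [h2, zpow_add₀ (by norm_num : (-1 : ℂ) ≠ 0), zpow_mul]
  norm_num

lemma two_dvd_mul_pred (r : ℤ) : 2 ∣ r * (r - 1) := by
  rcases Int.even_or_odd r with h | h
  · exact Dvd.dvd.mul_right h.two_dvd _
  · have : Even (r - 1) := by rcases h with ⟨k, hk⟩; exact ⟨k, by omega⟩
    exact Dvd.dvd.mul_left this.two_dvd _

lemma mul_half (t : ℤ) (h : 2 ∣ t) : (8 : ℤ) * (t / 2) = 4 * t := by omega

/-- normal-form term -/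
noncomputable def Gf (e : ℕ × ℕ → ℤ) (q : ℂ) (p : ℕ × ℕ) : ℂ :=
  (-1 : ℂ) ^ ((p.1 : ℤ) + p.2) * q ^ (e p)

def e1p (p : ℕ × ℕ) : ℤ :=
  8 * p.1 + 8 * p.2 + 4 * (p.1 : ℤ) * (p.1 - 1) + 12 * p.1 * p.2 + 4 * (p.2 : ℤ) * (p.2 - 1)

def e1m (p : ℕ × ℕ) : ℤ :=
  -8 * ((p.1 : ℤ) + 1) - 8 * ((p.2 : ℤ) + 1) + 4 * ((p.1 : ℤ) + 1) * ((p.1 : ℤ) + 2) +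
    12 * ((p.1 : ℤ) + 1) * ((p.2 : ℤ) + 1) + 4 * ((p.2 : ℤ) + 1) * ((p.2 : ℤ) + 2)

def e2p (p : ℕ × ℕ) : ℤ :=
  9 + 18 * p.1 + 18 * p.2 + 4 * (p.1 : ℤ) * (p.1 - 1) + 12 * p.1 * p.2 +
    4 * (p.2 : ℤ) * (p.2 - 1)

def e2m (p : ℕ × ℕ) : ℤ :=
  9 - 18 * ((p.1 : ℤ) + 1) - 18 * ((p.2 : ℤ) + 1) + 4 * ((p.1 : ℤ) + 1) * ((p.1 : ℤ) + 2) +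
    12 * ((p.1 : ℤ) + 1) * ((p.2 : ℤ) + 1) + 4 * ((p.2 : ℤ) + 1) * ((p.2 : ℤ) + 2)

/- normalization of positive-quadrant summand -/
lemma posNorm (q : ℂ) (hq0 : q ≠ 0) (k : ℕ) (e : ℕ × ℕ → ℤ)
    (he : ∀ p : ℕ × ℕ, e p = k * p.1 + k * p.2 + 4 * (p.1 : ℤ) * (p.1 - 1) + 12 * p.1 * p.2 +
      4 * (p.2 : ℤ) * (p.2 - 1)) (p : ℕ × ℕ) :
    (-1 : ℂ) ^ (p.1 + p.2) * (q ^ k) ^ p.1 * (q ^ k) ^ p.2 *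
      q ^ (8 * ((p.1 : ℤ) * ((p.1 : ℤ) - 1) / 2) + 12 * (p.1 : ℤ) * (p.2 : ℤ) +
        8 * ((p.2 : ℤ) * ((p.2 : ℤ) - 1) / 2))
    = Gf e q p := by
  obtain ⟨r, s⟩ := p
  show (-1 : ℂ) ^ (r + s) * (q ^ k) ^ r * (q ^ k) ^ s * _ = _
  rw [← pow_mul, ← pow_mul, ← zpow_natCast q (k * r), ← zpow_natCast q (k * s),
    mul_assoc, mul_assoc, ← zpow_add₀ hq0, ← zpow_add₀ hq0, Gf]
  have hsgn : (-1 : ℂ) ^ (r + s) = (-1 : ℂ) ^ (((r, s).1 : ℤ) + ((r, s).2 : ℤ)) := by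
    rw [← zpow_natCast (-1 : ℂ) (r + s)]
    exact neg_one_zpow_congr (by push_cast; omega)
  have hexp : (↑(k * r) + (↑(k * s) + (8 * ((r : ℤ) * ((r : ℤ) - 1) / 2) +
      12 * (r : ℤ) * (s : ℤ) + 8 * ((s : ℤ) * ((s : ℤ) - 1) / 2)))) = e (r, s) := by
    rw [mul_half _ (two_dvd_mul_pred _), mul_half _ (two_dvd_mul_pred _), he]
    push_cast
    ring
  rw [hsgn, hexp]

lemma negNorm (q : ℂ) (hq0 : q ≠ 0) (k : ℕ) (e : ℕ × ℕ → ℤ)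
    (he : ∀ p : ℕ × ℕ, e p = k * (-(p.1 : ℤ) - 1) + k * (-(p.2 : ℤ) - 1) +
      4 * ((p.1 : ℤ) + 1) * ((p.1 : ℤ) + 2) + 12 * ((p.1 : ℤ) + 1) * ((p.2 : ℤ) + 1) +
      4 * ((p.2 : ℤ) + 1) * ((p.2 : ℤ) + 2)) (p : ℕ × ℕ) :
    (-1 : ℂ) ^ ((-(p.1 : ℤ) - 1) + (-(p.2 : ℤ) - 1)) *
      (q ^ k) ^ (-(p.1 : ℤ) - 1) * (q ^ k) ^ (-(p.2 : ℤ) - 1) *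
      q ^ (8 * ((-(p.1 : ℤ) - 1) * ((-(p.1 : ℤ) - 1) - 1) / 2) +
        12 * (-(p.1 : ℤ) - 1) * (-(p.2 : ℤ) - 1) +
        8 * ((-(p.2 : ℤ) - 1) * ((-(p.2 : ℤ) - 1) - 1) / 2))
    = Gf e q p := by
  obtain ⟨r, s⟩ := p
  show (-1 : ℂ) ^ ((-(r : ℤ) - 1) + (-(s : ℤ) - 1)) * (q ^ k) ^ (-(r : ℤ) - 1) *
      (q ^ k) ^ (-(s : ℤ) - 1) * _ = _
  rw [← zpow_natCast q k, ← zpow_mul, ← zpow_mul,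
    mul_assoc, mul_assoc, ← zpow_add₀ hq0, ← zpow_add₀ hq0, Gf]
  have hsgn : (-1 : ℂ) ^ ((-(r : ℤ) - 1) + (-(s : ℤ) - 1))
      = (-1 : ℂ) ^ (((r, s).1 : ℤ) + ((r, s).2 : ℤ)) := by
    exact neg_one_zpow_congr (by omega)
  have hexp : ((k : ℤ) * (-(r : ℤ) - 1) + ((k : ℤ) * (-(s : ℤ) - 1) +
      (8 * ((-(r : ℤ) - 1) * ((-(r : ℤ) - 1) - 1) / 2) +
        12 * (-(r : ℤ) - 1) * (-(s : ℤ) - 1) +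
        8 * ((-(s : ℤ) - 1) * ((-(s : ℤ) - 1) - 1) / 2)))) = e (r, s) := by
    rw [mul_half _ (two_dvd_mul_pred _), mul_half _ (two_dvd_mul_pred _), he]
    push_cast
    ring
  rw [hsgn, hexp]

/- ============ summability ============ -/

lemma summable_Gf (q : ℂ) (hq : ‖q‖ < 1) (hq0 : q ≠ 0) (e : ℕ × ℕ → ℤ)
    (he : ∀ p : ℕ × ℕ, (p.1 : ℤ) + p.2 - 20 ≤ e p) : Summable (Gf e q) := by
  have h0 : (0 : ℝ) < ‖q‖ := norm_pos_iff.mpr hq0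
  refine Summable.of_norm_bounded
    (g := fun p : ℕ × ℕ => ‖q‖ ^ (-20 : ℤ) * (‖q‖ ^ p.1 * ‖q‖ ^ p.2)) ?_ ?_
  · exact ((summable_geometric_of_lt_one h0.le hq).mul_of_nonneg
      (summable_geometric_of_lt_one h0.le hq)
      (fun _ => by positivity) (fun _ => by positivity)).mul_left _
  · intro p
    have h1 : ‖Gf e q p‖ = ‖q‖ ^ (e p) := by
      rw [Gf, norm_mul, norm_zpow, norm_zpow]
      simp
    rw [h1]
    calc ‖q‖ ^ (e p) ≤ ‖q‖ ^ ((p.1 : ℤ) + p.2 - 20) :=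
          zpow_le_zpow_right_of_le_one₀ h0 hq.le (he p)
      _ = ‖q‖ ^ (-20 : ℤ) * (‖q‖ ^ p.1 * ‖q‖ ^ p.2) := by
          rw [show (p.1 : ℤ) + p.2 - 20 = (-20) + ((p.1 : ℤ) + (p.2 : ℤ)) by ring,
            zpow_add₀ h0.ne', zpow_add₀ h0.ne', zpow_natCast, zpow_natCast]

/- ============ diagonal decomposition ============ -/

lemma tsum_prod_eq (f : ℕ × ℕ → ℂ) (hf : Summable f) :
    ∑' p : ℕ × ℕ, f p = ∑' n : ℕ, ∑ kl ∈ Finset.HasAntidiagonal.antidiagonal n, f kl := by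
  have h := Finset.HasAntidiagonal.sigmaAntidiagonalEquivProd.summable_iff.mpr hf
  calc ∑' p : ℕ × ℕ, f p
      = ∑' c : (Σ n : ℕ, (Finset.HasAntidiagonal.antidiagonal n : Finset (ℕ × ℕ))),
          (f ∘ Finset.HasAntidiagonal.sigmaAntidiagonalEquivProd) c :=
        (Equiv.tsum_eq Finset.HasAntidiagonal.sigmaAntidiagonalEquivProd f).symm
    _ = ∑' n : ℕ, ∑' c : (Finset.HasAntidiagonal.antidiagonal n : Finset (ℕ × ℕ)),
          (f ∘ Finset.HasAntidiagonal.sigmaAntidiagonalEquivProd) ⟨n, c⟩ := Summable.tsum_sigma h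
    _ = ∑' n : ℕ, ∑ kl ∈ Finset.HasAntidiagonal.antidiagonal n, f kl :=
        tsum_congr fun n => Finset.tsum_subtype (Finset.HasAntidiagonal.antidiagonal n) f

lemma summable_diag (f : ℕ × ℕ → ℂ) (hf : Summable f) :
    Summable fun n : ℕ => ∑ kl ∈ Finset.HasAntidiagonal.antidiagonal n, f kl := by
  have h := Finset.HasAntidiagonal.sigmaAntidiagonalEquivProd.summable_iff.mpr hf
  have h2 := h.sigma
  exact h2.congr fun n => Finset.tsum_subtype (Finset.HasAntidiagonal.antidiagonal n) f

/- ============ shift ============ -/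

noncomputable def shiftf (h : ℕ → ℂ) : ℕ → ℂ
  | 0 => 0
  | n + 1 => h n

lemma shiftf_support (h : ℕ → ℂ) : ∀ x ∉ Set.range Nat.succ, shiftf h x = 0 := by
  rintro (_ | x) hx
  · rfl
  · exact absurd ⟨x, rfl⟩ hx

lemma summable_shiftf {h : ℕ → ℂ} (hs : Summable h) : Summable (shiftf h) :=
  (Nat.succ_injective.summable_iff (shiftf_support h)).mp hs

lemma tsum_shiftf (h : ℕ → ℂ) : ∑' n, shiftf h n = ∑' n, h n := by
  have hsupp : Function.support (shiftf h) ⊆ Set.range Nat.succ := fun x hx => by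
    by_contra hc
    exact hx (shiftf_support h x hc)
  have := Nat.succ_injective.tsum_eq (f := shiftf h) hsupp
  exact this.symm

/- ============ finite bijections ============ -/

lemma bij_even (q : ℂ) (n : ℕ) (C : ℤ) (e : ℕ × ℕ → ℤ)
    (hE : ∀ r s : ℕ, r + s = n → e (r, s) = C - ((r : ℤ) - s) ^ 2) :
    ∑ j ∈ (Finset.Icc (-(n : ℤ)) (n : ℤ)).filter (fun j => (j + (n : ℤ)) % 2 = 0),
      (-1 : ℂ) ^ j * q ^ (C - j ^ 2)
    = ∑ kl ∈ Finset.HasAntidiagonal.antidiagonal n, Gf e q kl := by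
  refine Finset.sum_bij' (i := fun j _ => (((j + n) / 2).toNat, ((n - j) / 2).toNat))
    (j := fun kl _ => (kl.1 : ℤ) - kl.2) ?_ ?_ ?_ ?_ ?_
  · intro j hj
    simp only [Finset.mem_filter, Finset.mem_Icc] at hj
    simp only [Finset.HasAntidiagonal.mem_antidiagonal]
    omega
  · intro kl hkl
    simp only [Finset.HasAntidiagonal.mem_antidiagonal] at hkl
    simp only [Finset.mem_filter, Finset.mem_Icc]
    omega
  · intro j hj
    simp only [Finset.mem_filter, Finset.mem_Icc] at hj
    dsimp only
    omega
  · intro kl hkl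
    simp only [Finset.HasAntidiagonal.mem_antidiagonal] at hkl
    obtain ⟨r, s⟩ := kl
    dsimp only
    simp only [Prod.mk.injEq]
    constructor <;> omega
  · intro j hj
    simp only [Finset.mem_filter, Finset.mem_Icc] at hj
    set r : ℕ := ((j + n) / 2).toNat with hr
    set s : ℕ := ((n - j) / 2).toNat with hs
    have h1 : 2 * (r : ℤ) = j + n := by omega
    have h2 : 2 * (s : ℤ) = n - j := by omega
    have hsum : r + s = n := by omega
    rw [Gf, hE r s hsum, show ((r : ℤ) - s) = j by omega]
    have hsgn : (-1 : ℂ) ^ j = (-1 : ℂ) ^ (((r, s).1 : ℤ) + ((r, s).2 : ℤ)) :=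
      neg_one_zpow_congr (by omega)
    rw [hsgn]

lemma bij_odd (q : ℂ) (m : ℕ) (n : ℕ) (hn : n = m + 1) (C : ℤ) (e : ℕ × ℕ → ℤ)
    (hE : ∀ r s : ℕ, r + s = m → e (r, s) = C - ((r : ℤ) - s) ^ 2) :
    ∑ j ∈ (Finset.Icc (-(n : ℤ)) (n : ℤ)).filter (fun j => ¬(j + (n : ℤ)) % 2 = 0),
      (-1 : ℂ) ^ j * q ^ (C - j ^ 2)
    = ∑ kl ∈ Finset.HasAntidiagonal.antidiagonal m, Gf e q kl := by
  subst hn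
  refine Finset.sum_bij' (i := fun j _ => (((j + m) / 2).toNat, ((m - j) / 2).toNat))
    (j := fun kl _ => (kl.1 : ℤ) - kl.2) ?_ ?_ ?_ ?_ ?_
  · intro j hj
    simp only [Finset.mem_filter, Finset.mem_Icc] at hj
    simp only [Finset.HasAntidiagonal.mem_antidiagonal]
    push_cast at hj
    omega
  · intro kl hkl
    simp only [Finset.HasAntidiagonal.mem_antidiagonal] at hkl
    simp only [Finset.mem_filter, Finset.mem_Icc]
    push_cast
    omega
  · intro j hj
    simp only [Finset.mem_filter, Finset.mem_Icc] at hj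
    push_cast at hj
    dsimp only
    omega
  · intro kl hkl
    simp only [Finset.HasAntidiagonal.mem_antidiagonal] at hkl
    obtain ⟨r, s⟩ := kl
    dsimp only
    simp only [Prod.mk.injEq]
    constructor <;> omega
  · intro j hj
    simp only [Finset.mem_filter, Finset.mem_Icc] at hj
    push_cast at hj
    set r : ℕ := ((j + m) / 2).toNat with hr
    set s : ℕ := ((m - j) / 2).toNat with hs
    have h1 : 2 * (r : ℤ) = j + m := by omega
    have h2 : 2 * (s : ℤ) = m - j := by omega
    have hsum : r + s = m := by omega
    rw [Gf, hE r s hsum, show ((r : ℤ) - s) = j by omega]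
    have hsgn : (-1 : ℂ) ^ j = (-1 : ℂ) ^ (((r, s).1 : ℤ) + ((r, s).2 : ℤ)) :=
      neg_one_zpow_congr (by omega)
    rw [hsgn]

/- ============ the per-index identity ============ -/

lemma keyfin (q : ℂ) (hq0 : q ≠ 0) (n : ℕ) :
    q ^ (5 * n ^ 2 + 4 * n) * (1 - q ^ (2 * n + 1)) *
        ∑ j ∈ Finset.Icc (-(n : ℤ)) (n : ℤ), (-1 : ℂ) ^ j * q ^ (-j ^ 2)
    = ((∑ kl ∈ Finset.HasAntidiagonal.antidiagonal n, Gf e1p q kl)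
        - shiftf (fun m => ∑ kl ∈ Finset.HasAntidiagonal.antidiagonal m, Gf e1m q kl) n)
      + ((shiftf (fun m => ∑ kl ∈ Finset.HasAntidiagonal.antidiagonal m, Gf e2p q kl) n)
        - ∑ kl ∈ Finset.HasAntidiagonal.antidiagonal n, Gf e2m q kl) := by
  have step1 : q ^ (5 * n ^ 2 + 4 * n) * (1 - q ^ (2 * n + 1)) *
        ∑ j ∈ Finset.Icc (-(n : ℤ)) (n : ℤ), (-1 : ℂ) ^ j * q ^ (-j ^ 2)
      = (∑ j ∈ Finset.Icc (-(n : ℤ)) (n : ℤ),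
          (-1 : ℂ) ^ j * q ^ ((5 * (n : ℤ) ^ 2 + 4 * n) - j ^ 2))
        - ∑ j ∈ Finset.Icc (-(n : ℤ)) (n : ℤ),
          (-1 : ℂ) ^ j * q ^ ((5 * (n : ℤ) ^ 2 + 6 * n + 1) - j ^ 2) := by
    rw [Finset.mul_sum, ← Finset.sum_sub_distrib]
    refine Finset.sum_congr rfl fun j hj => ?_
    have h1 : q ^ (5 * n ^ 2 + 4 * n) * q ^ (-j ^ 2 : ℤ)
        = q ^ ((5 * (n : ℤ) ^ 2 + 4 * n) - j ^ 2) := by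
      rw [← zpow_natCast q (5 * n ^ 2 + 4 * n), ← zpow_add₀ hq0]
      congr 1 <;> (push_cast; try ring)
    have h2 : q ^ (5 * n ^ 2 + 4 * n) * q ^ (2 * n + 1) * q ^ (-j ^ 2 : ℤ)
        = q ^ ((5 * (n : ℤ) ^ 2 + 6 * n + 1) - j ^ 2) := by
      rw [← pow_add, ← zpow_natCast q (5 * n ^ 2 + 4 * n + (2 * n + 1)), ← zpow_add₀ hq0]
      congr 1 <;> (push_cast; try ring)
    calc q ^ (5 * n ^ 2 + 4 * n) * (1 - q ^ (2 * n + 1)) * ((-1 : ℂ) ^ j * q ^ (-j ^ 2 : ℤ))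
        = (-1 : ℂ) ^ j * (q ^ (5 * n ^ 2 + 4 * n) * q ^ (-j ^ 2 : ℤ))
          - (-1 : ℂ) ^ j * (q ^ (5 * n ^ 2 + 4 * n) * q ^ (2 * n + 1) * q ^ (-j ^ 2 : ℤ)) := by
          ring
      _ = _ := by rw [h1, h2]
  rw [step1,
    ← Finset.sum_filter_add_sum_filter_not (Finset.Icc (-(n : ℤ)) (n : ℤ))
      (fun j => (j + (n : ℤ)) % 2 = 0)
      (fun j => (-1 : ℂ) ^ j * q ^ ((5 * (n : ℤ) ^ 2 + 4 * n) - j ^ 2)),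
    ← Finset.sum_filter_add_sum_filter_not (Finset.Icc (-(n : ℤ)) (n : ℤ))
      (fun j => (j + (n : ℤ)) % 2 = 0)
      (fun j => (-1 : ℂ) ^ j * q ^ ((5 * (n : ℤ) ^ 2 + 6 * n + 1) - j ^ 2))]
  rw [bij_even q n (5 * (n : ℤ) ^ 2 + 4 * n) e1p (by
      intro r s h
      have hh : (n : ℤ) = (r : ℤ) + s := by omega
      simp only [e1p]
      rw [hh]; ring),
    bij_even q n (5 * (n : ℤ) ^ 2 + 6 * n + 1) e2m (by
      intro r s h
      have hh : (n : ℤ) = (r : ℤ) + s := by omega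
      simp only [e2m]
      rw [hh]; ring)]
  cases n with
  | zero =>
    have hfe : ∀ (f : ℤ → ℂ),
        ∑ j ∈ (Finset.Icc (-((0 : ℕ) : ℤ)) ((0 : ℕ) : ℤ)).filter
          (fun j => ¬(j + ((0 : ℕ) : ℤ)) % 2 = 0), f j = 0 := by
      intro f
      rw [Finset.filter_eq_empty_iff.mpr, Finset.sum_empty]
      intro x hx
      simp only [Finset.mem_Icc] at hx
      omega
    rw [hfe, hfe]
    simp only [shiftf]
    ring
  | succ m =>
    rw [bij_odd q m (m + 1) rfl (5 * (((m + 1 : ℕ)) : ℤ) ^ 2 + 4 * ((m + 1 : ℕ) : ℤ)) e2p (by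
        intro r s h
        have hh : (((m + 1 : ℕ)) : ℤ) = (r : ℤ) + s + 1 := by push_cast; omega
        simp only [e2p]
        rw [hh]; ring),
      bij_odd q m (m + 1) rfl (5 * (((m + 1 : ℕ)) : ℤ) ^ 2 + 6 * ((m + 1 : ℕ) : ℤ) + 1) e1m (by
        intro r s h
        have hh : (((m + 1 : ℕ)) : ℤ) = (r : ℤ) + s + 1 := by push_cast; omega
        simp only [e1m]
        rw [hh]; ring)]
    simp only [shiftf]
    ring

/- ============ folding in q^9 ============ -/

lemma q9_fold (q : ℂ) (hq0 : q ≠ 0) (z E F : ℤ) (hEF : F = 9 + E) :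
    q ^ (9 : ℕ) * ((-1 : ℂ) ^ z * q ^ E) = (-1 : ℂ) ^ z * q ^ F := by
  rw [hEF, zpow_add₀ hq0, show ((9 : ℤ)) = ((9 : ℕ) : ℤ) by norm_num, zpow_natCast]
  ring


end HeckeAux

theorem stmt13 (q : ℂ) (hq : ‖q‖ < 1) (hq0 : q ≠ 0) :
    (∑' n : ℕ, q ^ (5 * n ^ 2 + 4 * n) * (1 - q ^ (2 * n + 1)) *
        ∑ j ∈ Finset.Icc (-(n : ℤ)) (n : ℤ), (-1 : ℂ) ^ j * q ^ (-j ^ 2)) =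
      heckeF 8 12 8 (q ^ 8) (q ^ 8) q + q ^ 9 * heckeF 8 12 8 (q ^ 18) (q ^ 18) q := by
  have s1p : Summable (Gf e1p q) := summable_Gf q hq hq0 e1p (by
    rintro ⟨r, s⟩
    simp only [e1p]
    have hr : (0 : ℤ) ≤ r := Int.natCast_nonneg r
    have hs : (0 : ℤ) ≤ s := Int.natCast_nonneg s
    nlinarith [mul_nonneg hr hs, sq_nonneg (r : ℤ), sq_nonneg (s : ℤ)])
  have s1m : Summable (Gf e1m q) := summable_Gf q hq hq0 e1m (by
    rintro ⟨r, s⟩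
    simp only [e1m]
    have hr : (0 : ℤ) ≤ r := Int.natCast_nonneg r
    have hs : (0 : ℤ) ≤ s := Int.natCast_nonneg s
    nlinarith [mul_nonneg hr hs, sq_nonneg (r : ℤ), sq_nonneg (s : ℤ)])
  have s2p : Summable (Gf e2p q) := summable_Gf q hq hq0 e2p (by
    rintro ⟨r, s⟩
    simp only [e2p]
    have hr : (0 : ℤ) ≤ r := Int.natCast_nonneg r
    have hs : (0 : ℤ) ≤ s := Int.natCast_nonneg s
    nlinarith [mul_nonneg hr hs, sq_nonneg (r : ℤ), sq_nonneg (s : ℤ)])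
  have s2m : Summable (Gf e2m q) := summable_Gf q hq hq0 e2m (by
    rintro ⟨r, s⟩
    simp only [e2m]
    have hr : (0 : ℤ) ≤ r := Int.natCast_nonneg r
    have hs : (0 : ℤ) ≤ s := Int.natCast_nonneg s
    nlinarith [mul_nonneg hr hs, sq_nonneg (r : ℤ), sq_nonneg (s : ℤ)])
  have c1p := summable_diag _ s1p
  have c1m := summable_diag _ s1m
  have c2p := summable_diag _ s2p
  have c2m := summable_diag _ s2m
  have hF1 : heckeF 8 12 8 (q ^ 8) (q ^ 8) q
      = (∑' p : ℕ × ℕ, Gf e1p q p) - ∑' p : ℕ × ℕ, Gf e1m q p := by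
    unfold heckeF
    congr 1
    · exact tsum_congr fun p =>
        posNorm q hq0 8 e1p (fun r => by simp only [e1p]; push_cast; ring) p
    · exact tsum_congr fun p =>
        negNorm q hq0 8 e1m (fun r => by simp only [e1m]; push_cast; ring) p
  have hF2 : q ^ 9 * heckeF 8 12 8 (q ^ 18) (q ^ 18) q
      = (∑' p : ℕ × ℕ, Gf e2p q p) - ∑' p : ℕ × ℕ, Gf e2m q p := by
    unfold heckeF
    rw [mul_sub, ← tsum_mul_left, ← tsum_mul_left]
    congr 1
    · refine tsum_congr fun p => ?_
      rw [posNorm q hq0 18 (fun r => 18 * r.1 + 18 * r.2 + 4 * (r.1 : ℤ) * (r.1 - 1)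
            + 12 * r.1 * r.2 + 4 * (r.2 : ℤ) * (r.2 - 1)) (fun r => by push_cast; ring) p]
      simp only [Gf]
      exact q9_fold q hq0 _ _ _ (by simp only [e2p]; push_cast; ring)
    · refine tsum_congr fun p => ?_
      rw [negNorm q hq0 18 (fun r => 18 * (-(r.1 : ℤ) - 1) + 18 * (-(r.2 : ℤ) - 1)
            + 4 * ((r.1 : ℤ) + 1) * ((r.1 : ℤ) + 2) + 12 * ((r.1 : ℤ) + 1) * ((r.2 : ℤ) + 1)
            + 4 * ((r.2 : ℤ) + 1) * ((r.2 : ℤ) + 2)) (fun r => by push_cast; ring) p]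
      simp only [Gf]
      exact q9_fold q hq0 _ _ _ (by simp only [e2m]; push_cast; ring)
  rw [hF1, hF2,
    tsum_prod_eq _ s1p, tsum_prod_eq _ s1m, tsum_prod_eq _ s2p, tsum_prod_eq _ s2m,
    ← tsum_shiftf (fun m => ∑ kl ∈ Finset.HasAntidiagonal.antidiagonal m, Gf e1m q kl),
    ← tsum_shiftf (fun m => ∑ kl ∈ Finset.HasAntidiagonal.antidiagonal m, Gf e2p q kl),
    ← Summable.tsum_sub c1p (summable_shiftf c1m),
    ← Summable.tsum_sub (summable_shiftf c2p) c2m,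
    ← Summable.tsum_add (c1p.sub (summable_shiftf c1m)) ((summable_shiftf c2p).sub c2m)]
  exact tsum_congr fun n => keyfin q hq0 n
end

section
/- (Bressoud–Singh conjugate Bailey pair) The pair δ_n = q^n, γ_n = (q^n/(q;q)_∞²) Σ_{j≥0} (-1)^j q^{j(j+1)/2 + 2nj} is a conjugate Bailey pair relative to a = 1, i.e. γ_n = Σ_{j≥n} δ_j / ( (q;q)_{j-n} (q;q)_{j+n} ) for all n ≥ 0. -/
open scoped BigOperators

open Filter

namespace BSaux

lemma weier (x : ℕ → ℝ) (h0 : ∀ k, 0 ≤ x k) (h1 : ∀ k, x k ≤ 1) (s : Finset ℕ) :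
    1 - ∑ k ∈ s, x k ≤ ∏ k ∈ s, (1 - x k) := by
  classical
  induction s using Finset.induction_on with
  | empty => simp
  | @insert a s ha ih =>
    rw [Finset.prod_insert ha, Finset.sum_insert ha]
    have hs : 0 ≤ ∑ k ∈ s, x k := Finset.sum_nonneg fun k _ => h0 k
    have hp : (0:ℝ) ≤ ∏ k ∈ s, (1 - x k) :=
      Finset.prod_nonneg fun k _ => by linarith [h1 k]
    nlinarith [h0 a, h1 a]

lemma tri (i : ℕ) : (i+1)*i/2 = i*(i-1)/2 + i := by
  cases i with
  | zero => rfl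
  | succ j =>
    have h : (j+1+1)*(j+1) = (j+1)*((j+1)-1) + 2*(j+1) := by
      simp only [Nat.succ_sub_one]; ring
    omega

lemma tri2 (k : ℕ) : k*(k-1)/2 + k = k*(k+1)/2 := by
  cases k with
  | zero => rfl
  | succ j =>
    have h2 : (j+1)*((j+1)-1) = (j+1)*j := by simp
    have h : (j+1)*((j+1)+1) = (j+1)*j + 2*(j+1) := by ring
    omega

lemma exists_C {q : ℂ} (hq : ‖q‖ < 1) :
    ∃ C : ℝ, 0 < C ∧ ∀ n : ℕ, C ≤ ‖qPoch q q n‖ := by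
  have hr0 : 0 ≤ ‖q‖ := norm_nonneg q
  have hx0 : ∀ k : ℕ, 0 ≤ ‖q‖ ^ (k+1) := fun k => pow_nonneg hr0 _
  have hx1 : ∀ k : ℕ, ‖q‖ ^ (k+1) ≤ 1 := fun k => pow_le_one₀ hr0 hq.le
  have hxlt : ∀ k : ℕ, ‖q‖ ^ (k+1) < 1 := fun k => pow_lt_one₀ hr0 hq (Nat.succ_ne_zero k)
  have hsum : Summable (fun k : ℕ => ‖q‖ ^ (k+1)) :=
    (summable_nat_add_iff (f := fun k => ‖q‖ ^ k) 1).2 (summable_geometric_of_lt_one hr0 hq)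
  have htail : Tendsto (fun N => ∑' k : ℕ, ‖q‖ ^ ((k + N) + 1)) atTop (nhds 0) := by
    simpa using tendsto_sum_nat_add (fun k => ‖q‖ ^ (k+1))
  obtain ⟨N, hN⟩ := (htail.eventually (eventually_le_nhds (by norm_num : (0:ℝ) < 1/2))).exists
  have hprodpos : 0 < ∏ k ∈ Finset.range N, (1 - ‖q‖ ^ (k+1)) :=
    Finset.prod_pos fun k _ => by linarith [hxlt k]
  refine ⟨(∏ k ∈ Finset.range N, (1 - ‖q‖ ^ (k+1))) * (1/2), by positivity, fun n => ?_⟩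
  have hbase : ∀ m : ℕ, ∏ k ∈ Finset.range m, (1 - ‖q‖ ^ (k+1)) ≤ ‖qPoch q q m‖ := by
    intro m
    rw [qPoch, norm_prod]
    apply Finset.prod_le_prod
    · intro k _; linarith [hxlt k]
    · intro k _
      have h1 : ‖(1:ℂ)‖ - ‖q * q ^ k‖ ≤ ‖1 - q * q ^ k‖ := norm_sub_norm_le _ _
      have h2 : ‖q * q ^ k‖ = ‖q‖ ^ (k+1) := by
        rw [norm_mul, norm_pow, pow_succ]; ring
      rw [h2, norm_one] at h1; linarith
  refine le_trans ?_ (hbase n)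
  rcases le_or_gt n N with hn | hn
  · have hsplit : (∏ k ∈ Finset.range n, (1 - ‖q‖ ^ (k+1))) *
        ∏ k ∈ Finset.Ico n N, (1 - ‖q‖ ^ (k+1)) = ∏ k ∈ Finset.range N, (1 - ‖q‖ ^ (k+1)) := by
      simp only [Finset.range_eq_Ico]
      exact Finset.prod_Ico_consecutive _ (Nat.zero_le n) hn
    have hIle : ∏ k ∈ Finset.Ico n N, (1 - ‖q‖ ^ (k+1)) ≤ 1 := by
      apply Finset.prod_le_one <;> intro k _ <;> linarith [hxlt k, hx0 k]
    have hnpos : 0 ≤ ∏ k ∈ Finset.range n, (1 - ‖q‖ ^ (k+1)) :=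
      Finset.prod_nonneg fun k _ => by linarith [hxlt k]
    have := mul_le_mul_of_nonneg_left hIle hnpos
    rw [hsplit] at this
    nlinarith [this, hprodpos]
  · have hsplit : (∏ k ∈ Finset.range N, (1 - ‖q‖ ^ (k+1))) *
        ∏ k ∈ Finset.Ico N n, (1 - ‖q‖ ^ (k+1)) = ∏ k ∈ Finset.range n, (1 - ‖q‖ ^ (k+1)) := by
      simp only [Finset.range_eq_Ico]
      exact Finset.prod_Ico_consecutive _ (Nat.zero_le N) hn.le
    have hsumle : ∑ k ∈ Finset.Ico N n, ‖q‖ ^ (k+1) ≤ 1/2 := by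
      refine le_trans ?_ hN
      have hshift : Summable (fun k : ℕ => ‖q‖ ^ ((k + N) + 1)) :=
        (summable_nat_add_iff (f := fun k => ‖q‖ ^ (k+1)) N).2 hsum
      have : ∑ k ∈ Finset.Ico N n, ‖q‖ ^ (k+1)
          = ∑ j ∈ Finset.range (n - N), ‖q‖ ^ ((j + N) + 1) := by
        rw [Finset.sum_Ico_eq_sum_range]
        exact Finset.sum_congr rfl fun j _ => by ring_nf
      rw [this]
      exact Summable.sum_le_tsum _ (fun j _ => hx0 _) hshift
    have hw := weier (fun k => ‖q‖ ^ (k+1)) hx0 hx1 (Finset.Ico N n)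
    have hhalf : (1/2 : ℝ) ≤ ∏ k ∈ Finset.Ico N n, (1 - ‖q‖ ^ (k+1)) := by
      linarith
    have := mul_le_mul_of_nonneg_left hhalf hprodpos.le
    rw [hsplit] at this
    linarith

end BSaux

namespace BSaux

variable {q : ℂ}

/-- Generic power series with coefficients `a`. -/
noncomputable def Ser (a : ℕ → ℂ) (z : ℂ) : ℂ := ∑' k, a k * z ^ k

/-- `(z;q)_∞`-style product. -/
noncomputable def Pr (q z : ℂ) : ℂ := ∏' k : ℕ, (1 - z * q ^ k)

lemma one_sub_ne {w : ℂ} (hw : ‖w‖ < 1) : 1 - w ≠ 0 := by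
  intro h
  rw [sub_eq_zero] at h
  rw [← h] at hw
  simp at hw

lemma summable_ser {a : ℕ → ℂ} {B : ℝ} (hB : ∀ k, ‖a k‖ ≤ B) {z : ℂ} (hz : ‖z‖ < 1) :
    Summable fun k => a k * z ^ k := by
  apply Summable.of_norm
  apply Summable.of_nonneg_of_le (fun k => norm_nonneg _) (fun k => ?_)
    ((summable_geometric_of_lt_one (norm_nonneg z) hz).mul_left B)
  rw [norm_mul, norm_pow]
  exact mul_le_mul_of_nonneg_right (hB k) (pow_nonneg (norm_nonneg z) k)

lemma norm_ser_sub_one_le {a : ℕ → ℂ} {B : ℝ} (hB : ∀ k, ‖a k‖ ≤ B) (ha0 : a 0 = 1)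
    {z w : ℂ} (hz : ‖z‖ < 1) (hw : ‖w‖ ≤ ‖z‖) :
    ‖Ser a w - 1‖ ≤ B * (1 - ‖z‖)⁻¹ * ‖w‖ := by
  have hBnn : 0 ≤ B := le_trans (norm_nonneg _) (hB 0)
  have hw1 : ‖w‖ < 1 := lt_of_le_of_lt hw hz
  have hsum := summable_ser hB hw1
  have h0 : Ser a w = 1 + ∑' k, a (k+1) * w ^ (k+1) := by
    rw [Ser, Summable.tsum_eq_zero_add hsum, ha0]
    simp
  rw [h0, add_sub_cancel_left]
  have hgeom : HasSum (fun k : ℕ => (B * ‖w‖) * ‖z‖ ^ k) (B * ‖w‖ * (1 - ‖z‖)⁻¹) :=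
    (hasSum_geometric_of_lt_one (norm_nonneg z) hz).mul_left _
  have hb : ∀ k : ℕ, ‖a (k+1) * w ^ (k+1)‖ ≤ (B * ‖w‖) * ‖z‖ ^ k := by
    intro k
    rw [norm_mul, norm_pow, pow_succ]
    calc ‖a (k+1)‖ * (‖w‖ ^ k * ‖w‖) ≤ B * (‖z‖ ^ k * ‖w‖) := by
          apply mul_le_mul (hB _) ?_ (by positivity) hBnn
          exact mul_le_mul_of_nonneg_right (pow_le_pow_left₀ (norm_nonneg w) hw k) (norm_nonneg w)
      _ = (B * ‖w‖) * ‖z‖ ^ k := by ring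
  calc ‖∑' k, a (k+1) * w ^ (k+1)‖ ≤ B * ‖w‖ * (1 - ‖z‖)⁻¹ := tsum_of_norm_bounded hgeom hb
    _ = B * (1 - ‖z‖)⁻¹ * ‖w‖ := by ring

lemma tendsto_ser_one {a : ℕ → ℂ} {B : ℝ} (hB : ∀ k, ‖a k‖ ≤ B) (ha0 : a 0 = 1)
    (hq : ‖q‖ < 1) {z : ℂ} (hz : ‖z‖ < 1) :
    Filter.Tendsto (fun N => Ser a (q ^ N * z)) atTop (nhds 1) := by
  have hBnn : 0 ≤ B := le_trans (norm_nonneg _) (hB 0)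
  rw [tendsto_iff_norm_sub_tendsto_zero]
  apply squeeze_zero (fun N => norm_nonneg _)
    (g := fun N => (B * (1 - ‖z‖)⁻¹ * ‖z‖) * ‖q‖ ^ N)
  · intro N
    have hwle : ‖q ^ N * z‖ ≤ ‖z‖ := by
      rw [norm_mul, norm_pow]
      exact mul_le_of_le_one_left (norm_nonneg z) (pow_le_one₀ (norm_nonneg q) hq.le)
    calc ‖Ser a (q ^ N * z) - 1‖ ≤ B * (1 - ‖z‖)⁻¹ * ‖q ^ N * z‖ :=
          norm_ser_sub_one_le hB ha0 hz hwle
      _ = (B * (1 - ‖z‖)⁻¹ * ‖z‖) * ‖q‖ ^ N := by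
          rw [norm_mul, norm_pow]; ring
  · simpa using (tendsto_pow_atTop_nhds_zero_of_lt_one (norm_nonneg q) hq).const_mul
      (B * (1 - ‖z‖)⁻¹ * ‖z‖)

lemma hasSum_shift {h : ℕ → ℂ} {c : ℂ} (h0 : h 0 = 0)
    (hs : HasSum (fun k => h (k+1)) c) : HasSum h c := by
  have := (hasSum_nat_add_iff (f := h) 1).1 hs
  simpa [h0] using this

lemma multipliable_pr (hq : ‖q‖ < 1) {z : ℂ} (hz : ‖z‖ < 1) :
    Multipliable fun k : ℕ => 1 - z * q ^ k := by
  have hwn : ∀ k : ℕ, ‖z * q ^ k‖ ≤ ‖z‖ := fun k => by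
    rw [norm_mul, norm_pow]
    exact mul_le_of_le_one_right (norm_nonneg z) (pow_le_one₀ (norm_nonneg q) hq.le)
  apply Complex.multipliable_of_summable_log
  have hten : Filter.Tendsto (fun k : ℕ => ‖z‖ * ‖q‖ ^ k) atTop (nhds 0) := by
    simpa using (tendsto_pow_atTop_nhds_zero_of_lt_one (norm_nonneg q) hq).const_mul ‖z‖
  have hev : ∀ᶠ k : ℕ in atTop, ‖z‖ * ‖q‖ ^ k ≤ 1/2 :=
    hten.eventually (eventually_le_nhds (by norm_num))
  apply Summable.of_norm_bounded_eventually_nat (g := fun k => 3/2 * (‖z‖ * ‖q‖ ^ k))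
  · exact (((summable_geometric_of_lt_one (norm_nonneg q) hq).mul_left ‖z‖).mul_left (3/2))
  · filter_upwards [hev] with k hk
    have h1 : ‖-(z * q ^ k)‖ ≤ 1/2 := by
      rw [norm_neg, norm_mul, norm_pow]; exact hk
    have := Complex.norm_log_one_add_half_le_self h1
    rw [norm_neg, norm_mul, norm_pow] at this
    simpa [sub_eq_add_neg] using this

lemma tendsto_pr (hq : ‖q‖ < 1) {z : ℂ} (hz : ‖z‖ < 1) :
    Filter.Tendsto (fun N => ∏ k ∈ Finset.range N, (1 - z * q ^ k)) atTop (nhds (Pr q z)) :=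
  (multipliable_pr hq hz).hasProd.tendsto_prod_nat

lemma norm_mul_pow_lt (hq : ‖q‖ < 1) {z : ℂ} (hz : ‖z‖ < 1) (M : ℕ) : ‖z * q ^ M‖ < 1 :=
  lt_of_le_of_lt (by
    rw [norm_mul, norm_pow]
    exact mul_le_of_le_one_right (norm_nonneg z) (pow_le_one₀ (norm_nonneg q) hq.le)) hz

lemma pr_split (hq : ‖q‖ < 1) {z : ℂ} (hz : ‖z‖ < 1) (M : ℕ) :
    Pr q z = (∏ k ∈ Finset.range M, (1 - z * q ^ k)) * Pr q (z * q ^ M) := by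
  have hz' : ‖z * q ^ M‖ < 1 := norm_mul_pow_lt hq hz M
  have h1 : Filter.Tendsto (fun N => ∏ k ∈ Finset.range (N + M), (1 - z * q ^ k)) atTop
      (nhds (Pr q z)) := (tendsto_pr hq hz).comp (tendsto_add_atTop_nat M)
  have h2 : ∀ N : ℕ, ∏ k ∈ Finset.range (N + M), (1 - z * q ^ k)
      = (∏ k ∈ Finset.range M, (1 - z * q ^ k)) *
        ∏ k ∈ Finset.range N, (1 - (z * q ^ M) * q ^ k) := by
    intro N
    rw [add_comm, Finset.prod_range_add]
    congr 1
    apply Finset.prod_congr rfl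
    intro i _
    rw [pow_add]
    ring
  have h3 : Filter.Tendsto (fun N => (∏ k ∈ Finset.range M, (1 - z * q ^ k)) *
      ∏ k ∈ Finset.range N, (1 - (z * q ^ M) * q ^ k)) atTop
      (nhds ((∏ k ∈ Finset.range M, (1 - z * q ^ k)) * Pr q (z * q ^ M))) :=
    (tendsto_pr hq hz').const_mul _
  exact tendsto_nhds_unique (h1.congr h2) h3

end BSaux

namespace BSaux

variable {q : ℂ}

noncomputable def aF (q : ℂ) (k : ℕ) : ℂ := (qPoch q q k)⁻¹
noncomputable def aG (q : ℂ) (k : ℕ) : ℂ := (-1)^k * q^(k*(k-1)/2) * (qPoch q q k)⁻¹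

lemma qPoch_zero : qPoch q q 0 = 1 := by simp [qPoch]

lemma qPoch_succ (i : ℕ) : qPoch q q (i+1) = qPoch q q i * (1 - q * q ^ i) :=
  Finset.prod_range_succ _ i

lemma aF_zero : aF q 0 = 1 := by simp [aF, qPoch_zero]

lemma aG_zero : aG q 0 = 1 := by simp [aG, qPoch_zero]

lemma one_sub_qpow_ne (hq : ‖q‖ < 1) (i : ℕ) : 1 - q * q ^ i ≠ 0 := by
  apply one_sub_ne
  calc ‖q * q ^ i‖ = ‖q‖ * ‖q‖ ^ i := by rw [norm_mul, norm_pow]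
    _ ≤ ‖q‖ * 1 := by
        exact mul_le_mul_of_nonneg_left (pow_le_one₀ (norm_nonneg q) hq.le) (norm_nonneg q)
    _ < 1 := by rw [mul_one]; exact hq

section withC

variable {C : ℝ} (hC0 : 0 < C) (hC : ∀ n, C ≤ ‖qPoch q q n‖)

include hC0 hC

lemma norm_aF_le : ∀ k, ‖aF q k‖ ≤ C⁻¹ := by
  intro k
  rw [aF, norm_inv]
  exact inv_anti₀ hC0 (hC k)

lemma norm_aG_le (hq : ‖q‖ < 1) : ∀ k, ‖aG q k‖ ≤ C⁻¹ := by
  intro k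
  rw [aG, norm_mul, norm_mul, norm_pow, norm_pow, norm_neg, norm_one, one_pow, one_mul,
    norm_inv]
  calc ‖q‖ ^ (k*(k-1)/2) * ‖qPoch q q k‖⁻¹ ≤ 1 * C⁻¹ := by
        apply mul_le_mul (pow_le_one₀ (norm_nonneg q) hq.le)
          (inv_anti₀ hC0 (hC k)) (by positivity) one_pos.le
    _ = C⁻¹ := one_mul _

end withC

lemma FF_eq (hq : ‖q‖ < 1) {C : ℝ} (hC0 : 0 < C) (hC : ∀ n, C ≤ ‖qPoch q q n‖)
    {z : ℂ} (hz : ‖z‖ < 1) : Ser (aF q) (q * z) = (1 - z) * Ser (aF q) z := by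
  have hqz : ‖q * z‖ < 1 := by
    calc ‖q * z‖ = ‖q‖ * ‖z‖ := norm_mul q z
      _ ≤ 1 * ‖z‖ := mul_le_mul_of_nonneg_right hq.le (norm_nonneg z)
      _ < 1 := by rw [one_mul]; exact hz
  have h1 : HasSum (fun i => aF q i * z ^ i) (Ser (aF q) z) :=
    (summable_ser (norm_aF_le hC0 hC) hz).hasSum
  have h2 : HasSum (fun i => aF q i * (q*z) ^ i) (Ser (aF q) (q*z)) :=
    (summable_ser (norm_aF_le hC0 hC) hqz).hasSum
  have h3 : HasSum (fun i => aF q i * z ^ i - aF q i * (q*z) ^ i)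
      (Ser (aF q) z - Ser (aF q) (q*z)) := h1.sub h2
  have key : ∀ i : ℕ, aF q (i+1) * z ^ (i+1) - aF q (i+1) * (q*z) ^ (i+1)
      = z * (aF q i * z ^ i) := by
    intro i
    have hu := one_sub_qpow_ne hq i
    have hDi : qPoch q q i ≠ 0 := by
      intro h
      have := hC i
      rw [h, norm_zero] at this
      linarith
    rw [aF, aF, qPoch_succ, mul_inv]
    have hqz1 : (q*z) ^ (i+1) = (q * q ^ i) * z ^ (i+1) := by ring
    rw [hqz1]
    field_simp
    ring
  have h4 : HasSum (fun i => aF q (i+1) * z ^ (i+1) - aF q (i+1) * (q*z) ^ (i+1))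
      (z * Ser (aF q) z) := by
    have hfun : (fun i => aF q (i+1) * z ^ (i+1) - aF q (i+1) * (q*z) ^ (i+1))
        = fun i => z * (aF q i * z ^ i) := funext key
    rw [hfun]
    exact h1.mul_left z
  have h5 : HasSum (fun i => aF q i * z ^ i - aF q i * (q*z) ^ i) (z * Ser (aF q) z) :=
    hasSum_shift (by simp [aF_zero]) h4
  have h6 := h3.unique h5
  linear_combination -h6

lemma GG_eq (hq : ‖q‖ < 1) {C : ℝ} (hC0 : 0 < C) (hC : ∀ n, C ≤ ‖qPoch q q n‖)
    {z : ℂ} (hz : ‖z‖ < 1) : Ser (aG q) z = (1 - z) * Ser (aG q) (q * z) := by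
  have hqz : ‖q * z‖ < 1 := by
    calc ‖q * z‖ = ‖q‖ * ‖z‖ := norm_mul q z
      _ ≤ 1 * ‖z‖ := mul_le_mul_of_nonneg_right hq.le (norm_nonneg z)
      _ < 1 := by rw [one_mul]; exact hz
  have h1 : HasSum (fun i => aG q i * z ^ i) (Ser (aG q) z) :=
    (summable_ser (norm_aG_le hC0 hC hq) hz).hasSum
  have h2 : HasSum (fun i => aG q i * (q*z) ^ i) (Ser (aG q) (q*z)) :=
    (summable_ser (norm_aG_le hC0 hC hq) hqz).hasSum
  have h3 : HasSum (fun i => aG q i * z ^ i - aG q i * (q*z) ^ i)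
      (Ser (aG q) z - Ser (aG q) (q*z)) := h1.sub h2
  have key : ∀ i : ℕ, aG q (i+1) * z ^ (i+1) - aG q (i+1) * (q*z) ^ (i+1)
      = (-z) * (aG q i * (q*z) ^ i) := by
    intro i
    have hu := one_sub_qpow_ne hq i
    have hDi : qPoch q q i ≠ 0 := by
      intro h
      have := hC i
      rw [h, norm_zero] at this
      linarith
    have he1 : (i+1) - 1 = i := by omega
    have he2 : (i+1)*i/2 = i*(i-1)/2 + i := tri i
    rw [aG, aG, he1, he2, qPoch_succ, mul_inv, pow_add]
    have hqz1 : (q*z) ^ (i+1) = (q * q ^ i) * z ^ (i+1) := by ring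
    have hqz2 : (q*z) ^ i = q ^ i * z ^ i := mul_pow q z i
    rw [hqz1, hqz2]
    field_simp
    ring
  have h4 : HasSum (fun i => aG q (i+1) * z ^ (i+1) - aG q (i+1) * (q*z) ^ (i+1))
      ((-z) * Ser (aG q) (q*z)) := by
    have hfun : (fun i => aG q (i+1) * z ^ (i+1) - aG q (i+1) * (q*z) ^ (i+1))
        = fun i => (-z) * (aG q i * (q*z) ^ i) := funext key
    rw [hfun]
    exact h2.mul_left (-z)
  have h5 : HasSum (fun i => aG q i * z ^ i - aG q i * (q*z) ^ i) ((-z) * Ser (aG q) (q*z)) :=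
    hasSum_shift (by simp [aG_zero]) h4
  have h6 := h3.unique h5
  linear_combination h6

lemma FF_iter (hq : ‖q‖ < 1) {C : ℝ} (hC0 : 0 < C) (hC : ∀ n, C ≤ ‖qPoch q q n‖)
    {z : ℂ} (hz : ‖z‖ < 1) (N : ℕ) :
    (∏ k ∈ Finset.range N, (1 - z * q ^ k)) * Ser (aF q) z = Ser (aF q) (q ^ N * z) := by
  induction N with
  | zero => simp
  | succ N ih =>
    have hz' : ‖q ^ N * z‖ < 1 := by
      rw [mul_comm]
      exact norm_mul_pow_lt hq hz N
    have hstep := FF_eq hq hC0 hC hz'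
    have harg : q * (q ^ N * z) = q ^ (N+1) * z := by ring
    rw [harg] at hstep
    have harg2 : (1 : ℂ) - q ^ N * z = 1 - z * q ^ N := by ring
    rw [hstep, harg2, ← ih, Finset.prod_range_succ]
    ring

lemma GG_iter (hq : ‖q‖ < 1) {C : ℝ} (hC0 : 0 < C) (hC : ∀ n, C ≤ ‖qPoch q q n‖)
    {z : ℂ} (hz : ‖z‖ < 1) (N : ℕ) :
    Ser (aG q) z = (∏ k ∈ Finset.range N, (1 - z * q ^ k)) * Ser (aG q) (q ^ N * z) := by
  induction N with
  | zero => simp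
  | succ N ih =>
    have hz' : ‖q ^ N * z‖ < 1 := by
      rw [mul_comm]
      exact norm_mul_pow_lt hq hz N
    have hstep := GG_eq hq hC0 hC hz'
    have harg : q * (q ^ N * z) = q ^ (N+1) * z := by ring
    rw [harg] at hstep
    rw [ih, hstep, Finset.prod_range_succ]
    ring

lemma cauchy (hq : ‖q‖ < 1) {C : ℝ} (hC0 : 0 < C) (hC : ∀ n, C ≤ ‖qPoch q q n‖)
    {z : ℂ} (hz : ‖z‖ < 1) : Pr q z * Ser (aF q) z = 1 := by
  have t1 : Filter.Tendsto (fun N => (∏ k ∈ Finset.range N, (1 - z * q ^ k)) * Ser (aF q) z)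
      atTop (nhds (Pr q z * Ser (aF q) z)) := (tendsto_pr hq hz).mul_const _
  have t2 : Filter.Tendsto (fun N => Ser (aF q) (q ^ N * z)) atTop (nhds 1) :=
    tendsto_ser_one (norm_aF_le hC0 hC) aF_zero hq hz
  exact tendsto_nhds_unique (t1.congr (FF_iter hq hC0 hC hz)) t2

lemma euler (hq : ‖q‖ < 1) {C : ℝ} (hC0 : 0 < C) (hC : ∀ n, C ≤ ‖qPoch q q n‖)
    {z : ℂ} (hz : ‖z‖ < 1) : Ser (aG q) z = Pr q z := by
  have t2 : Filter.Tendsto (fun N => Ser (aG q) (q ^ N * z)) atTop (nhds 1) :=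
    tendsto_ser_one (norm_aG_le hC0 hC hq) aG_zero hq hz
  have t1 : Filter.Tendsto (fun N => (∏ k ∈ Finset.range N, (1 - z * q ^ k)) *
      Ser (aG q) (q ^ N * z)) atTop (nhds (Pr q z * 1)) := (tendsto_pr hq hz).mul t2
  have t3 : Filter.Tendsto (fun _ : ℕ => Ser (aG q) z) atTop (nhds (Pr q z * 1)) :=
    t1.congr (fun N => (GG_iter hq hC0 hC hz N).symm)
  have := tendsto_nhds_unique tendsto_const_nhds t3
  rw [mul_one] at this
  exact this

end BSaux


set_option maxHeartbeats 2000000 in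
theorem stmt17 (q : ℂ) (hq : ‖q‖ < 1) :
    ∀ n : ℕ, (q ^ n / qPochInf q q ^ 2) *
        ∑' j : ℕ, (-1 : ℂ) ^ j * q ^ (j * (j + 1) / 2 + 2 * n * j) =
      ∑' i : ℕ, q ^ (n + i) / (qPoch q q i * qPoch q q (2 * n + i)) := by
  intro n
  obtain ⟨C, hC0, hC⟩ := BSaux.exists_C hq
  have hD : ∀ i, qPoch q q i ≠ 0 := by
    intro i h
    have := hC i
    rw [h, norm_zero] at this
    linarith
  have hqm : ∀ m : ℕ, ‖q ^ (m+1)‖ < 1 := by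
    intro m
    rw [norm_pow]
    calc ‖q‖ ^ (m+1) ≤ ‖q‖ := pow_le_of_le_one (norm_nonneg q) hq.le (Nat.succ_ne_zero m)
      _ < 1 := hq
  have hPrfl : qPochInf q q = BSaux.Pr q q := rfl
  have hsplit : ∀ m : ℕ, qPochInf q q = qPoch q q m * BSaux.Pr q (q ^ (m+1)) := by
    intro m
    have h := BSaux.pr_split hq (z := q) hq m
    have harg : q * q ^ m = q ^ (m+1) := by rw [pow_succ]; ring
    rw [harg] at h
    exact hPrfl.trans h
  have hPq0 : qPochInf q q ≠ 0 := by
    have h1 := (BSaux.tendsto_pr hq (z := q) hq).norm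
    have h2 : C ≤ ‖BSaux.Pr q q‖ :=
      ge_of_tendsto' h1 (fun N => hC N)
    rw [hPrfl]
    intro h
    rw [h, norm_zero] at h2
    linarith
  have hPm : ∀ m, BSaux.Pr q (q^(m+1)) = qPochInf q q / qPoch q q m := by
    intro m
    rw [eq_div_iff (hD m)]
    linear_combination -(hsplit m)
  have hFval : ∀ k, BSaux.Ser (BSaux.aF q) (q^(k+1)) = qPoch q q k / qPochInf q q := by
    intro k
    have hc := BSaux.cauchy hq hC0 hC (hqm k)
    rw [hPm k] at hc
    rw [eq_div_iff hPq0]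
    field_simp [hD k] at hc
    linear_combination hc
  set T : ℕ → ℕ → ℂ := fun i k =>
    (-1:ℂ)^k * q^(n+i + k*(k-1)/2 + (2*n+i+1)*k) / (qPoch q q i * qPoch q q k) with hT
  have step1 : ∀ i : ℕ, q^(n+i) / (qPoch q q i * qPoch q q (2*n+i))
      = (qPochInf q q)⁻¹ * ∑' k, T i k := by
    intro i
    have hE := BSaux.euler hq hC0 hC (hqm (2*n+i))
    have hsum_k : ∑' k, T i k
        = (q^(n+i) * (qPoch q q i)⁻¹) * BSaux.Ser (BSaux.aG q) (q^(2*n+i+1)) := by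
      rw [BSaux.Ser, ← tsum_mul_left]
      apply tsum_congr
      intro k
      simp only [hT, BSaux.aG]
      rw [pow_add, pow_add, pow_mul]
      field_simp
    rw [hsum_k, hE, hPm (2*n+i)]
    field_simp
  have hgeoC : Summable (fun i : ℕ => C⁻¹ * ‖q‖^i) :=
    (summable_geometric_of_lt_one (norm_nonneg q) hq).mul_left _
  have hgeopos : ∀ i : ℕ, 0 ≤ C⁻¹ * ‖q‖^i := fun i => by positivity
  have hTsum : Summable (Function.uncurry T) := by
    apply Summable.of_norm_bounded (g := fun p : ℕ × ℕ => (C⁻¹ * ‖q‖^p.1) * (C⁻¹ * ‖q‖^p.2))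
      (Summable.mul_of_nonneg hgeoC hgeoC hgeopos hgeopos)
    rintro ⟨i, k⟩
    have hik : i + k ≤ n+i + k*(k-1)/2 + (2*n+i+1)*k := by
      apply Nat.add_le_add
      · exact (Nat.le_add_left i n).trans (Nat.le_add_right _ _)
      · exact Nat.le_mul_of_pos_left k (by omega)
    have h1 : ‖q‖ ^ (n+i + k*(k-1)/2 + (2*n+i+1)*k) ≤ ‖q‖ ^ (i+k) :=
      pow_le_pow_of_le_one (norm_nonneg q) hq.le hik
    have hnorm : ‖Function.uncurry T (i, k)‖
        = ‖q‖ ^ (n+i + k*(k-1)/2 + (2*n+i+1)*k) / (‖qPoch q q i‖ * ‖qPoch q q k‖) := by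
      simp only [Function.uncurry, hT]
      rw [norm_div, norm_mul, norm_mul, norm_pow, norm_pow, norm_neg, norm_one, one_pow,
        one_mul]
    rw [hnorm]
    calc ‖q‖ ^ (n+i + k*(k-1)/2 + (2*n+i+1)*k) / (‖qPoch q q i‖ * ‖qPoch q q k‖)
        ≤ ‖q‖ ^ (i+k) / (C * C) :=
          div_le_div₀ (pow_nonneg (norm_nonneg q) _) h1 (by positivity)
            (mul_le_mul (hC i) (hC k) hC0.le (norm_nonneg _))
      _ = (C⁻¹ * ‖q‖^i) * (C⁻¹ * ‖q‖^k) := by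
          rw [pow_add]
          field_simp
  have hswap : ∑' i : ℕ, ∑' k : ℕ, T i k = ∑' k : ℕ, ∑' i : ℕ, T i k := (Summable.tsum_comm hTsum).symm
  have step4 : ∀ k : ℕ, ∑' i : ℕ, T i k
      = (-1:ℂ)^k * q^(n + k*(k-1)/2 + (2*n+1)*k) / qPochInf q q := by
    intro k
    have h1 : ∑' i : ℕ, T i k
        = ((-1:ℂ)^k * q^(n + k*(k-1)/2 + (2*n+1)*k) * (qPoch q q k)⁻¹) *
            BSaux.Ser (BSaux.aF q) (q^(k+1)) := by
      rw [BSaux.Ser, ← tsum_mul_left]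
      apply tsum_congr
      intro i
      simp only [hT, BSaux.aF]
      have he : n+i + k*(k-1)/2 + (2*n+i+1)*k = (n + k*(k-1)/2 + (2*n+1)*k) + (k+1)*i := by
        ring
      rw [he, pow_add, pow_mul]
      field_simp
    rw [h1, hFval k]
    have hcan : (qPoch q q k)⁻¹ * (qPoch q q k / qPochInf q q) = (qPochInf q q)⁻¹ := by
      rw [div_eq_mul_inv, ← mul_assoc, inv_mul_cancel₀ (hD k), one_mul]
    rw [mul_assoc, hcan, div_eq_mul_inv]
  have hAk : ∀ k : ℕ, n + k*(k-1)/2 + (2*n+1)*k = n + (k*(k+1)/2 + 2*n*k) := by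
    intro k
    rw [← BSaux.tri2 k]
    ring
  have step5 : ∑' k : ℕ, ((-1:ℂ)^k * q^(n + k*(k-1)/2 + (2*n+1)*k) / qPochInf q q)
      = (qPochInf q q)⁻¹ * (q^n * ∑' j : ℕ, (-1:ℂ)^j * q^(j*(j+1)/2 + 2*n*j)) := by
    have hterm : ∀ k : ℕ, (-1:ℂ)^k * q^(n + k*(k-1)/2 + (2*n+1)*k) / qPochInf q q
        = (qPochInf q q)⁻¹ * (q^n * ((-1:ℂ)^k * q^(k*(k+1)/2 + 2*n*k))) := by
      intro k
      rw [hAk k, pow_add]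
      ring
    rw [tsum_congr hterm, tsum_mul_left, tsum_mul_left]
  rw [tsum_congr step1, tsum_mul_left, hswap, tsum_congr step4, step5]
  ring
end
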